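/- arXiv:2007.15845 — 2 statements merged into one kernel-verified Lean document; each statement's English description precedes it below -/
import Mathlib

section
/- Consider the aRB-IRG algorithm under the following assumptions: each X_i is nonempty, closed, and convex; the set X = X_1 × ⋯ × X_d is bounded with ‖x‖ ≤ M for all x ∈ X; f is convex with ‖∇̃f(x)‖ ≤ C_f for all x ∈ X; F is continuous and monotone on X with ‖F(x)‖ ≤ C_F for all x ∈ X; the problem min{f(x) : x ∈ SOL(X,F)} has an optimal solution x*; and the sequences (γ_k) and (η_k) are strictly positive and nonincreasing. Then for any N ≥ 1, the averaged iterate satisfies E[f(x̄_N)] − f(x*) ≤ (4M² γ_N^{r−1}/η_N + Σ_{k=0}^{N} η_k^{-1} γ_k^{r+1}(C_F² + η_k² C_f²)) / (p_min Σ_{k=0}^{N} γ_k^r). -/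
open scoped RealInnerProductSpace
open MeasureTheory ProbabilityTheory

abbrev BlockSpace (d : ℕ) (n : Fin d → ℕ) :=
  PiLp 2 (fun i : Fin d => EuclideanSpace ℝ (Fin (n i)))

def VISol {d : ℕ} {n : Fin d → ℕ} (X : Set (BlockSpace d n))
    (F : BlockSpace d n → BlockSpace d n) : Set (BlockSpace d n) :=
  {x | x ∈ X ∧ ∀ y ∈ X, 0 ≤ ⟪F x, y - x⟫}

noncomputable section

/-- One step of the aRB-IRG algorithm, updating block `i`. -/
def rbStep {d : ℕ} {n : Fin d → ℕ}
    (proj : ∀ i, EuclideanSpace ℝ (Fin (n i)) → EuclideanSpace ℝ (Fin (n i)))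
    (F g : BlockSpace d n → BlockSpace d n) (γk ηk : ℝ)
    (z : BlockSpace d n) (i : Fin d) : BlockSpace d n :=
  WithLp.toLp 2 (Function.update z i (proj i (z i - γk • (F z i + ηk • g z i))))

/-- The deterministic value of the iterate after `k` steps, as a function of the
history of chosen blocks. -/
def rbPath {d : ℕ} {n : Fin d → ℕ}
    (proj : ∀ i, EuclideanSpace ℝ (Fin (n i)) → EuclideanSpace ℝ (Fin (n i)))
    (F g : BlockSpace d n → BlockSpace d n) (γ η : ℕ → ℝ) (x0 : BlockSpace d n) :
    ∀ k : ℕ, (Fin k → Fin d) → BlockSpace d n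
  | 0, _ => x0
  | (k+1), a => rbStep proj F g (γ k) (η k)
      (rbPath proj F g γ η x0 k (fun j => a j.castSucc)) (a (Fin.last k))

end

lemma sum_snoc_aux {d k : ℕ} (G : (Fin (k+1) → Fin d) → ℝ) :
    ∑ a, G a = ∑ b : Fin k → Fin d, ∑ i : Fin d, G (Fin.snoc b i) := by
  rw [← (Fin.snocEquiv (fun _ => Fin d)).sum_comp G, Fintype.sum_prod_type, Finset.sum_comm]
  rfl

lemma integral_history {Ω : Type*} [MeasurableSpace Ω] (μ : Measure Ω) [IsProbabilityMeasure μ]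
    {d : ℕ} (p : Fin d → ℝ) (hp : ∀ i, 0 ≤ p i)
    (ι : ℕ → Ω → Fin d) (hιmeas : ∀ k, Measurable (ι k))
    (hindep : iIndepFun ι μ)
    (hdist : ∀ k i, μ {ω | ι k ω = i} = ENNReal.ofReal (p i))
    (m : ℕ) (H : (Fin m → Fin d) → ℝ) :
    ∫ ω, H (fun j => ι j ω) ∂μ = ∑ a : Fin m → Fin d, (∏ j, p (a j)) * H a := by
  classical
  set C : (Fin m → Fin d) → Set Ω := fun a => ⋂ j : Fin m, (ι j) ⁻¹' {a j} with hC
  have hCmeas : ∀ a, MeasurableSet (C a) := fun a =>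
    MeasurableSet.iInter fun j => (hιmeas j) (measurableSet_singleton _)
  have hμC : ∀ a, μ (C a) = ENNReal.ofReal (∏ j, p (a j)) := by
    intro a
    set sets : ∀ _ : ℕ, Set (Fin d) := fun i =>
      if h : i < m then {a ⟨i, h⟩} else Set.univ with hsets
    have h1 : C a = ⋂ i ∈ Finset.range m, (ι i) ⁻¹' sets i := by
      ext ω
      simp only [hC, Set.mem_iInter, Set.mem_preimage, Set.mem_singleton_iff,
        Finset.mem_range, hsets]
      constructor
      · intro h i hi
        simpa [dif_pos hi] using h ⟨i, hi⟩
      · intro h j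
        simpa [dif_pos j.2] using h j.1 j.2
    have h2 := hindep.measure_inter_preimage_eq_mul (Finset.range m)
      (sets := sets) (fun i hi => by
        by_cases h : i < m <;> simp [hsets, h])
    rw [h1, h2]
    have h3 : ∀ i ∈ Finset.range m, μ (ι i ⁻¹' sets i)
        = ENNReal.ofReal (if h : i < m then p (a ⟨i, h⟩) else 1) := by
      intro i hi
      have hi' : i < m := Finset.mem_range.mp hi
      rw [dif_pos hi']
      have : (ι i) ⁻¹' sets i = {ω | ι i ω = a ⟨i, hi'⟩} := by
        ext ω; simp [hsets, dif_pos hi']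
      rw [this, hdist]
    rw [Finset.prod_congr rfl h3, ← ENNReal.ofReal_prod_of_nonneg (fun i _ => by
      by_cases h : i < m <;> simp [h, hp _])]
    congr 1
    rw [← Fin.prod_univ_eq_prod_range (fun i => if h : i < m then p (a ⟨i, h⟩) else 1) m]
    exact Finset.prod_congr rfl fun j _ => by simp [j.2]
  have hpt : (fun ω => H (fun j => ι j ω))
      = fun ω => ∑ a : Fin m → Fin d, (C a).indicator (fun _ => H a) ω := by
    funext ω
    refine ((Finset.sum_eq_single (fun j : Fin m => ι j ω) (fun a _ ha => ?_)
      (fun h => absurd (Finset.mem_univ _) h)).trans ?_).symm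
    · rw [Set.indicator_apply, if_neg]
      intro hmem
      exact ha (funext fun j => by
        have := Set.mem_iInter.mp hmem j
        simpa using this.symm)
    · simp only [Set.indicator_apply]
      rw [if_pos]
      simp [hC]
  rw [hpt, integral_finset_sum _ (fun a _ =>
    (integrable_const (H a)).indicator (hCmeas a))]
  refine Finset.sum_congr rfl fun a _ => ?_
  rw [integral_indicator_const _ (hCmeas a), measureReal_def, hμC a, smul_eq_mul,
    ENNReal.toReal_ofReal (Finset.prod_nonneg fun j _ => hp _)]
set_option maxHeartbeats 1000000 in
/-- Suboptimality bound for the aRB-IRG algorithm (Proposition 3.2(a)):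
for nonincreasing positive stepsizes `γ` and regularization parameters `η`, bounded `X`,
bounded subgradients and mapping, and an optimal solution `x*` of
`min{f(x) : x ∈ SOL(X,F)}`, one has for every `N ≥ 1`
`E[f(x̄_N)] − f(x*) ≤ (4M²γ_N^{r−1}/η_N + Σ_{k=0}^N η_k⁻¹ γ_k^{r+1}(C_F² + η_k²C_f²))
  / (p_min Σ_{k=0}^N γ_k^r)`. -/
theorem aRBIRG_suboptimality_bound {d : ℕ} {n : Fin d → ℕ}
    {Ω : Type*} [MeasurableSpace Ω] (μ : Measure Ω) [IsProbabilityMeasure μ]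
    [MeasurableSpace (BlockSpace d n)] [BorelSpace (BlockSpace d n)]
    (Xs : ∀ i, Set (EuclideanSpace ℝ (Fin (n i))))
    (hXne : ∀ i, (Xs i).Nonempty) (hXcl : ∀ i, IsClosed (Xs i)) (hXcv : ∀ i, Convex ℝ (Xs i))
    (X : Set (BlockSpace d n)) (hX : X = {x | ∀ i, x i ∈ Xs i})
    (M : ℝ) (hM : ∀ x ∈ X, ‖x‖ ≤ M)
    (f : BlockSpace d n → ℝ) (hf : ConvexOn ℝ Set.univ f)
    (g : BlockSpace d n → BlockSpace d n)
    (hsubgrad : ∀ x ∈ X, ∀ y : BlockSpace d n, f x + ⟪g x, y - x⟫ ≤ f y)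
    (Cf : ℝ) (hCf : ∀ x ∈ X, ‖g x‖ ≤ Cf)
    (F : BlockSpace d n → BlockSpace d n) (hFcont : Continuous F)
    (hmono : ∀ x ∈ X, ∀ y ∈ X, 0 ≤ ⟪F x - F y, x - y⟫)
    (CF : ℝ) (hCF : ∀ x ∈ X, ‖F x‖ ≤ CF)
    (p : Fin d → ℝ) (hp : ∀ i, 0 < p i) (hpsum : ∑ i, p i = 1)
    (pmin : ℝ) (hpmin : IsLeast (Set.range p) pmin)
    (ι : ℕ → Ω → Fin d) (hιmeas : ∀ k, Measurable (ι k))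
    (hindep : iIndepFun ι μ)
    (hdist : ∀ k i, μ {ω | ι k ω = i} = ENNReal.ofReal (p i))
    (γ η : ℕ → ℝ) (hγpos : ∀ k, 0 < γ k) (hηpos : ∀ k, 0 < η k)
    (hγmono : ∀ k, γ (k + 1) ≤ γ k) (hηmono : ∀ k, η (k + 1) ≤ η k)
    (r : ℝ) (hr0 : 0 ≤ r) (hr1 : r < 1)
    (proj : ∀ i, EuclideanSpace ℝ (Fin (n i)) → EuclideanSpace ℝ (Fin (n i)))
    (hproj : ∀ i z, proj i z ∈ Xs i ∧ ∀ w ∈ Xs i, ‖z - proj i z‖ ≤ ‖z - w‖)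
    (x0 : BlockSpace d n) (hx0X : x0 ∈ X)
    (x : ℕ → Ω → BlockSpace d n) (hxmeas : ∀ k, Measurable (x k))
    (hx0 : ∀ ω, x 0 ω = x0)
    (hxrec : ∀ k ω,
      (x (k + 1) ω) (ι k ω) = proj (ι k ω) ((x k ω) (ι k ω)
        - γ k • (F (x k ω) (ι k ω) + η k • g (x k ω) (ι k ω)))
      ∧ ∀ j, j ≠ ι k ω → x (k + 1) ω j = x k ω j)
    (xstar : BlockSpace d n)
    (hxstar : xstar ∈ VISol X F ∧ ∀ y ∈ VISol X F, f xstar ≤ f y)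
    (N : ℕ) (hN : 1 ≤ N) :
    (∫ ω, f ((∑ k ∈ Finset.range (N + 1), γ k ^ r)⁻¹
        • ∑ k ∈ Finset.range (N + 1), γ k ^ r • x k ω) ∂μ) - f xstar
      ≤ (4 * M ^ 2 * γ N ^ (r - 1) / η N
          + ∑ k ∈ Finset.range (N + 1), (η k)⁻¹ * γ k ^ (r + 1) * (CF ^ 2 + η k ^ 2 * Cf ^ 2))
        / (pmin * ∑ k ∈ Finset.range (N + 1), γ k ^ r) := by
  classical
  obtain ⟨i₀, hi₀⟩ := hpmin.1
  have hpmin_pos : 0 < pmin := hi₀ ▸ hp i₀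
  have hpmin_le : ∀ i, pmin ≤ p i := fun i => hpmin.2 (Set.mem_range_self i)
  have hpmin1 : pmin ≤ 1 := by
    have h := Finset.single_le_sum (f := p) (fun i _ => (hp i).le) (Finset.mem_univ i₀)
    rw [hpsum] at h
    exact hi₀ ▸ h
  have hyX : xstar ∈ X := hxstar.1.1
  have hyi : ∀ i, xstar i ∈ Xs i := by rw [hX] at hyX; exact hyX
  have hM0 : 0 ≤ M := le_trans (norm_nonneg x0) (hM x0 hx0X)
  -- projection facts
  have hprojchar : ∀ i (z w : EuclideanSpace ℝ (Fin (n i))), w ∈ Xs i →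
      ⟪z - proj i z, w - proj i z⟫ ≤ 0 := by
    intro i z w hw
    have hmem := (hproj i z).1
    haveI : Nonempty (Xs i) := ⟨⟨_, hmem⟩⟩
    have hbdd : BddBelow (Set.range fun w : Xs i => ‖z - w‖) := by
      refine ⟨0, ?_⟩
      rintro _ ⟨w', rfl⟩
      exact norm_nonneg _
    have hinf : ‖z - proj i z‖ = ⨅ w : Xs i, ‖z - w‖ := by
      refine le_antisymm (le_ciInf fun u => (hproj i z).2 u u.2) ?_
      exact ciInf_le hbdd ⟨_, hmem⟩
    exact (norm_eq_iInf_iff_real_inner_le_zero (hXcv i) hmem).mp hinf w hw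
  have hprojle : ∀ i (z w : EuclideanSpace ℝ (Fin (n i))), w ∈ Xs i →
      ‖proj i z - w‖ ^ 2 ≤ ‖z - w‖ ^ 2 := by
    intro i z w hw
    have h1 := hprojchar i z w hw
    have h2 : ‖z - w‖ ^ 2
        = ‖z - proj i z‖ ^ 2 + 2 * ⟪z - proj i z, proj i z - w⟫ + ‖proj i z - w‖ ^ 2 := by
      have h : z - w = (z - proj i z) + (proj i z - w) := by abel
      rw [h, norm_add_sq_real]
    have h3 : ⟪z - proj i z, proj i z - w⟫ = - ⟪z - proj i z, w - proj i z⟫ := by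
      rw [← inner_neg_right]; congr 1; abel
    nlinarith [sq_nonneg ‖z - proj i z‖]
  -- the weighted distance function
  set Dval : BlockSpace d n → ℝ := fun z => ∑ i, (p i)⁻¹ * ‖z i - xstar i‖ ^ 2 with hDval
  have hDupdate : ∀ (z : BlockSpace d n) (i : Fin d) (v : EuclideanSpace ℝ (Fin (n i))),
      Dval (WithLp.toLp 2 (Function.update z i v))
        = Dval z + (p i)⁻¹ * (‖v - xstar i‖ ^ 2 - ‖z i - xstar i‖ ^ 2) := by
    intro z i v
    have h1 : (fun j => (p j)⁻¹ * ‖Function.update z i v j - xstar j‖ ^ 2)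
        = Function.update (fun j => (p j)⁻¹ * ‖z j - xstar j‖ ^ 2) i
            ((p i)⁻¹ * ‖v - xstar i‖ ^ 2) := by
      funext j
      by_cases h : j = i
      · subst h; rw [Function.update_self, Function.update_self]
      · rw [Function.update_of_ne h, Function.update_of_ne h]
    have h2 := Finset.sum_eq_sum_sdiff_singleton_add (Finset.mem_univ i)
      (fun j => (p j)⁻¹ * ‖z j - xstar j‖ ^ 2)
    show ∑ j, (p j)⁻¹ * ‖Function.update z i v j - xstar j‖ ^ 2 = _
    rw [h1, Finset.sum_update_of_mem (Finset.mem_univ i)]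
    rw [hDval]
    dsimp only
    rw [h2]
    ring
  have hDnonneg : ∀ z, 0 ≤ Dval z := fun z =>
    Finset.sum_nonneg fun i _ => mul_nonneg (inv_nonneg.2 (hp i).le) (sq_nonneg _)
  have hDbound : ∀ z ∈ X, Dval z ≤ 4 * M ^ 2 / pmin := by
    intro z hz
    have h1 : Dval z ≤ ∑ i, pmin⁻¹ * ‖z i - xstar i‖ ^ 2 :=
      Finset.sum_le_sum fun i _ => mul_le_mul_of_nonneg_right
        (inv_anti₀ hpmin_pos (hpmin_le i)) (sq_nonneg _)
    have h2 : ∑ i, pmin⁻¹ * ‖z i - xstar i‖ ^ 2 = pmin⁻¹ * ‖z - xstar‖ ^ 2 := by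
      rw [← Finset.mul_sum, PiLp.norm_sq_eq_of_L2]
      congr 1
    have h3 : ‖z - xstar‖ ≤ 2 * M := by
      calc ‖z - xstar‖ ≤ ‖z‖ + ‖xstar‖ := norm_sub_le _ _
        _ ≤ 2 * M := by linarith [hM z hz, hM xstar hyX]
    have h4 : ‖z - xstar‖ ^ 2 ≤ 4 * M ^ 2 := by nlinarith [norm_nonneg (z - xstar)]
    calc Dval z ≤ pmin⁻¹ * ‖z - xstar‖ ^ 2 := h2 ▸ h1
      _ ≤ pmin⁻¹ * (4 * M ^ 2) :=
          mul_le_mul_of_nonneg_left h4 (inv_nonneg.2 hpmin_pos.le)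
      _ = 4 * M ^ 2 / pmin := by rw [div_eq_mul_inv]; ring
  -- the deterministic one-step inequality, averaged over blocks
  have hDstep : ∀ (k : ℕ) (z : BlockSpace d n), z ∈ X →
      ∑ i, p i * Dval (rbStep proj F g (γ k) (η k) z i)
        ≤ Dval z - 2 * γ k * η k * (f z - f xstar)
          + 2 * γ k ^ 2 * (CF ^ 2 + η k ^ 2 * Cf ^ 2) := by
    intro k z hz
    set w : BlockSpace d n := F z + η k • g z with hw
    have hzi : ∀ i, z i ∈ Xs i := by rw [hX] at hz; exact hz
    have hwapp : ∀ i, F z i + η k • g z i = w i := fun i => rfl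
    have hblock : ∀ i, ‖proj i (z i - γ k • w i) - xstar i‖ ^ 2
        ≤ ‖z i - xstar i‖ ^ 2 - 2 * γ k * ⟪w i, z i - xstar i⟫ + γ k ^ 2 * ‖w i‖ ^ 2 := by
      intro i
      have h1 := hprojle i (z i - γ k • w i) (xstar i) (hyi i)
      have h2 : z i - γ k • w i - xstar i = (z i - xstar i) - γ k • w i := by abel
      calc ‖proj i (z i - γ k • w i) - xstar i‖ ^ 2
          ≤ ‖z i - γ k • w i - xstar i‖ ^ 2 := h1
        _ = ‖z i - xstar i‖ ^ 2 - 2 * γ k * ⟪w i, z i - xstar i⟫ + γ k ^ 2 * ‖w i‖ ^ 2 := by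
            rw [h2, norm_sub_sq_real, real_inner_smul_right, norm_smul,
              Real.norm_eq_abs, mul_pow, sq_abs, real_inner_comm]
            ring
    have hsum : ∑ i, p i * Dval (rbStep proj F g (γ k) (η k) z i)
        = Dval z + ∑ i, (‖proj i (z i - γ k • w i) - xstar i‖ ^ 2 - ‖z i - xstar i‖ ^ 2) := by
      have hterm : ∀ i, p i * Dval (rbStep proj F g (γ k) (η k) z i)
          = p i * Dval z
            + (‖proj i (z i - γ k • w i) - xstar i‖ ^ 2 - ‖z i - xstar i‖ ^ 2) := by
        intro i
        rw [rbStep, hwapp, hDupdate]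
        rw [mul_add, ← mul_assoc, mul_inv_cancel₀ (hp i).ne', one_mul]
      rw [Finset.sum_congr rfl fun i _ => hterm i, Finset.sum_add_distrib, ← Finset.sum_mul,
        hpsum, one_mul]
    have hinner : ∑ i, ⟪w i, z i - xstar i⟫ = ⟪w, z - xstar⟫ := by
      rw [PiLp.inner_apply]
      exact Finset.sum_congr rfl fun i _ => by rw [PiLp.sub_apply]
    have hnorm : ∑ i, ‖w i‖ ^ 2 = ‖w‖ ^ 2 := (PiLp.norm_sq_eq_of_L2 _ w).symm
    have hFmono : (0:ℝ) ≤ ⟪F z, z - xstar⟫ := by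
      have h1 := hmono z hz xstar hyX
      have h2 := hxstar.1.2 z hz
      rw [inner_sub_left] at h1
      linarith
    have hsub : f z - f xstar ≤ ⟪g z, z - xstar⟫ := by
      have h1 := hsubgrad z hz xstar
      have h2 : ⟪g z, xstar - z⟫ = - ⟪g z, z - xstar⟫ := by
        rw [← inner_neg_right]; congr 1; abel
      rw [h2] at h1
      linarith
    have hwip : η k * (f z - f xstar) ≤ ⟪w, z - xstar⟫ := by
      rw [hw, inner_add_left, real_inner_smul_left]
      nlinarith [hηpos k]
    have hCF0 : (0:ℝ) ≤ CF := le_trans (norm_nonneg _) (hCF z hz)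
    have hCf0 : (0:ℝ) ≤ Cf := le_trans (norm_nonneg _) (hCf z hz)
    have hwnorm : ‖w‖ ^ 2 ≤ 2 * (CF ^ 2 + η k ^ 2 * Cf ^ 2) := by
      have h1 : ‖w‖ ≤ CF + η k * Cf := by
        calc ‖w‖ ≤ ‖F z‖ + ‖η k • g z‖ := norm_add_le _ _
          _ ≤ CF + η k * Cf := by
              rw [norm_smul, Real.norm_eq_abs, abs_of_pos (hηpos k)]
              exact add_le_add (hCF z hz)
                (mul_le_mul_of_nonneg_left (hCf z hz) (hηpos k).le)
      nlinarith [norm_nonneg w, sq_nonneg (CF - η k * Cf), hηpos k]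
    have hub : ∑ i, (‖proj i (z i - γ k • w i) - xstar i‖ ^ 2 - ‖z i - xstar i‖ ^ 2)
        ≤ - (2 * γ k) * ⟪w, z - xstar⟫ + γ k ^ 2 * ‖w‖ ^ 2 := by
      calc ∑ i, (‖proj i (z i - γ k • w i) - xstar i‖ ^ 2 - ‖z i - xstar i‖ ^ 2)
          ≤ ∑ i, (- (2 * γ k) * ⟪w i, z i - xstar i⟫ + γ k ^ 2 * ‖w i‖ ^ 2) :=
            Finset.sum_le_sum fun i _ => by have := hblock i; linarith
        _ = - (2 * γ k) * ⟪w, z - xstar⟫ + γ k ^ 2 * ‖w‖ ^ 2 := by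
            rw [Finset.sum_add_distrib, ← Finset.mul_sum, ← Finset.mul_sum, hinner, hnorm]
    rw [hsum]
    have hγ := hγpos k
    nlinarith [mul_le_mul_of_nonneg_left hwip (by linarith : (0:ℝ) ≤ 2 * γ k),
      mul_le_mul_of_nonneg_left hwnorm (sq_nonneg (γ k))]
  -- the deterministic path
  set Φ := rbPath proj F g γ η x0 with hΦ
  have hstepX : ∀ (k : ℕ) (z : BlockSpace d n) (i : Fin d), z ∈ X →
      rbStep proj F g (γ k) (η k) z i ∈ X := by
    intro k z i hz
    rw [hX]
    intro j
    by_cases hj : j = i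
    · subst hj; rw [rbStep, WithLp.ofLp_toLp, Function.update_self]; exact (hproj j _).1
    · rw [rbStep, WithLp.ofLp_toLp, Function.update_of_ne hj]; rw [hX] at hz; exact hz j
  have hΦX : ∀ (k : ℕ) (b : Fin k → Fin d), Φ k b ∈ X := by
    intro k
    induction k with
    | zero => intro b; exact hx0X
    | succ k ih => intro b; exact hstepX k _ _ (ih _)
  have hstep' : ∀ k ω, x (k + 1) ω = rbStep proj F g (γ k) (η k) (x k ω) (ι k ω) := by
    intro k ω
    apply PiLp.ext; intro j
    by_cases hj : j = ι k ω
    · subst hj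
      rw [(hxrec k ω).1]
      simp [rbStep]
    · rw [(hxrec k ω).2 j hj, rbStep]; exact (Function.update_of_ne hj _ _).symm
  have hxΦ : ∀ k ω, x k ω = Φ k (fun j => ι j ω) := by
    intro k
    induction k with
    | zero => intro ω; rw [hx0]; rfl
    | succ k ih =>
      intro ω
      rw [hstep', ih ω, hΦ]
      simp only [rbPath, Fin.val_last, Fin.coe_castSucc]
  -- weights
  have hwsum : ∀ m : ℕ, ∑ b : Fin m → Fin d, ∏ j, p (b j) = 1 := by
    intro m
    induction m with
    | zero => simp
    | succ m ih =>
      rw [sum_snoc_aux (fun a : Fin (m+1) → Fin d => ∏ j, p (a j))]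
      have h : ∀ b : Fin m → Fin d, ∀ i : Fin d,
          (∏ j : Fin (m+1), p ((Fin.snoc b i : Fin (m+1) → Fin d) j)) = (∏ j : Fin m, p (b j)) * p i := by
        intro b i
        rw [Fin.prod_univ_castSucc]
        simp [Fin.snoc_castSucc, Fin.snoc_last]
      calc ∑ b : Fin m → Fin d, ∑ i : Fin d, ∏ j : Fin (m+1), p ((Fin.snoc b i : Fin (m+1) → Fin d) j)
          = ∑ b : Fin m → Fin d, (∏ j : Fin m, p (b j)) * ∑ i, p i := by
            refine Finset.sum_congr rfl fun b _ => ?_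
            rw [Finset.mul_sum]
            exact Finset.sum_congr rfl fun i _ => h b i
        _ = 1 := by rw [hpsum]; simpa using ih
  have hwnonneg : ∀ {m : ℕ} (b : Fin m → Fin d), 0 ≤ ∏ j, p (b j) :=
    fun b => Finset.prod_nonneg fun j _ => (hp _).le
  -- expected values along the path
  set A : ℕ → ℝ := fun k => ∑ b : Fin k → Fin d, (∏ j, p (b j)) * Dval (Φ k b) with hA
  set B : ℕ → ℝ := fun k => ∑ b : Fin k → Fin d, (∏ j, p (b j)) * f (Φ k b) with hB
  have hA0 : ∀ k, 0 ≤ A k := fun k =>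
    Finset.sum_nonneg fun b _ => mul_nonneg (hwnonneg b) (hDnonneg _)
  have hAB : ∀ k, A k ≤ 4 * M ^ 2 / pmin := by
    intro k
    calc A k ≤ ∑ b : Fin k → Fin d, (∏ j, p (b j)) * (4 * M ^ 2 / pmin) :=
          Finset.sum_le_sum fun b _ =>
            mul_le_mul_of_nonneg_left (hDbound _ (hΦX k b)) (hwnonneg b)
      _ = 4 * M ^ 2 / pmin := by rw [← Finset.sum_mul, hwsum, one_mul]
  have hArec : ∀ k, A (k + 1) ≤ A k - 2 * γ k * η k * (B k - f xstar)
      + 2 * γ k ^ 2 * (CF ^ 2 + η k ^ 2 * Cf ^ 2) := by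
    intro k
    have h1 : A (k + 1) = ∑ b : Fin k → Fin d, (∏ j, p (b j))
        * ∑ i, p i * Dval (rbStep proj F g (γ k) (η k) (Φ k b) i) := by
      rw [hA]
      dsimp only
      rw [sum_snoc_aux (fun a : Fin (k+1) → Fin d => (∏ j, p (a j)) * Dval (Φ (k+1) a))]
      refine Finset.sum_congr rfl fun b _ => ?_
      rw [Finset.mul_sum]
      refine Finset.sum_congr rfl fun i _ => ?_
      have hwt : (∏ j : Fin (k+1), p ((Fin.snoc b i : Fin (k+1) → Fin d) j))
          = (∏ j : Fin k, p (b j)) * p i := by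
        rw [Fin.prod_univ_castSucc]
        simp [Fin.snoc_castSucc, Fin.snoc_last]
      have hΦs : Φ (k+1) (Fin.snoc b i) = rbStep proj F g (γ k) (η k) (Φ k b) i := by
        rw [hΦ]
        simp only [rbPath, Fin.snoc_castSucc, Fin.snoc_last]
      rw [hwt, hΦs]
      ring
    rw [h1]
    calc ∑ b : Fin k → Fin d, (∏ j, p (b j))
          * ∑ i, p i * Dval (rbStep proj F g (γ k) (η k) (Φ k b) i)
        ≤ ∑ b : Fin k → Fin d, (∏ j, p (b j)) * (Dval (Φ k b)
            - 2 * γ k * η k * (f (Φ k b) - f xstar)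
            + 2 * γ k ^ 2 * (CF ^ 2 + η k ^ 2 * Cf ^ 2)) :=
          Finset.sum_le_sum fun b _ =>
            mul_le_mul_of_nonneg_left (hDstep k _ (hΦX k b)) (hwnonneg b)
      _ = A k - 2 * γ k * η k * (B k - f xstar)
            + 2 * γ k ^ 2 * (CF ^ 2 + η k ^ 2 * Cf ^ 2) := by
          rw [Finset.sum_congr rfl (fun b _ => (by ring :
            (∏ j, p (b j)) * (Dval (Φ k b)
              - 2 * γ k * η k * (f (Φ k b) - f xstar)
              + 2 * γ k ^ 2 * (CF ^ 2 + η k ^ 2 * Cf ^ 2))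
            = (∏ j, p (b j)) * Dval (Φ k b)
              - 2 * γ k * η k * ((∏ j, p (b j)) * f (Φ k b))
              + (2 * γ k * η k * f xstar + 2 * γ k ^ 2 * (CF ^ 2 + η k ^ 2 * Cf ^ 2))
                * (∏ j, p (b j))))]
          rw [Finset.sum_add_distrib, Finset.sum_sub_distrib, ← Finset.mul_sum,
            ← Finset.mul_sum, hwsum k]
          rw [hA, hB]
          ring
  -- the per-step weighted inequality
  set lam : ℕ → ℝ := fun k => γ k ^ (r - 1) / (2 * η k) with hlam
  have hlamnn : ∀ k, 0 ≤ lam k := fun k => by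
    have := hγpos k; have := hηpos k; positivity
  have hlammono : ∀ k, lam k ≤ lam (k + 1) := by
    intro k
    have h1 : γ k ^ (r - 1) ≤ γ (k + 1) ^ (r - 1) :=
      Real.rpow_le_rpow_of_nonpos (hγpos (k + 1)) (hγmono k) (by linarith)
    have h2 := Real.rpow_pos_of_pos (hγpos k) (r - 1)
    exact div_le_div₀ (h2.le.trans h1) h1 (by linarith [hηpos (k + 1)]) (by linarith [hηmono k])
  have hk1 : ∀ k, γ k ^ r * (B k - f xstar) ≤ lam k * (A k - A (k + 1))
      + (η k)⁻¹ * γ k ^ (r + 1) * (CF ^ 2 + η k ^ 2 * Cf ^ 2) := by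
    intro k
    have hγk := hγpos k
    have hηk := hηpos k
    have hγr : γ k ^ (r - 1) * γ k = γ k ^ r := by
      rw [show r = r - 1 + 1 by ring, Real.rpow_add_one hγk.ne' (r - 1)]
      ring_nf
    have hγr2 : γ k ^ (r - 1) * γ k ^ 2 = γ k ^ (r + 1) := by
      have h2 : (γ k : ℝ) ^ (2:ℕ) = γ k ^ ((2:ℕ) : ℝ) := (Real.rpow_natCast _ 2).symm
      rw [h2, ← Real.rpow_add hγk]
      congr 1
      ring
    have h := hArec k
    have h3 : 2 * γ k * η k * (B k - f xstar)
        ≤ A k - A (k + 1) + 2 * γ k ^ 2 * (CF ^ 2 + η k ^ 2 * Cf ^ 2) := by linarith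
    have h4 := mul_le_mul_of_nonneg_left h3
      (by positivity : (0:ℝ) ≤ γ k ^ (r - 1) / (2 * η k))
    calc γ k ^ r * (B k - f xstar)
        = γ k ^ (r - 1) / (2 * η k) * (2 * γ k * η k * (B k - f xstar)) := by
          rw [← hγr]; field_simp
      _ ≤ γ k ^ (r - 1) / (2 * η k)
            * (A k - A (k + 1) + 2 * γ k ^ 2 * (CF ^ 2 + η k ^ 2 * Cf ^ 2)) := h4
      _ = lam k * (A k - A (k + 1))
            + (η k)⁻¹ * γ k ^ (r + 1) * (CF ^ 2 + η k ^ 2 * Cf ^ 2) := by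
          rw [hlam, ← hγr2]; field_simp
  have htel : ∀ m, ∑ k ∈ Finset.range (m + 1), lam k * (A k - A (k + 1))
      ≤ lam m * (4 * M ^ 2 / pmin) - lam m * A (m + 1) := by
    intro m
    induction m with
    | zero =>
      rw [Finset.sum_range_one]
      nlinarith [hAB 0, hA0 1, hlamnn 0]
    | succ m ih =>
      rw [Finset.sum_range_succ]
      nlinarith [hlammono m, hAB (m + 1), hA0 (m + 1), hA0 (m + 2), hlamnn (m + 1), hlamnn m,
        mul_nonneg (sub_nonneg.2 (hlammono m)) (sub_nonneg.2 (hAB (m + 1)))]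
  -- summed suboptimality bound
  set noise : ℝ := ∑ k ∈ Finset.range (N + 1),
    (η k)⁻¹ * γ k ^ (r + 1) * (CF ^ 2 + η k ^ 2 * Cf ^ 2) with hnoise
  have hnoise0 : 0 ≤ noise := Finset.sum_nonneg fun k _ => by
    have := hγpos k; have := hηpos k
    have h1 : 0 ≤ CF ^ 2 + η k ^ 2 * Cf ^ 2 := by positivity
    positivity
  have hsum1 : ∑ k ∈ Finset.range (N + 1), γ k ^ r * (B k - f xstar)
      ≤ lam N * (4 * M ^ 2 / pmin) + noise := by
    calc ∑ k ∈ Finset.range (N + 1), γ k ^ r * (B k - f xstar)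
        ≤ ∑ k ∈ Finset.range (N + 1), (lam k * (A k - A (k + 1))
            + (η k)⁻¹ * γ k ^ (r + 1) * (CF ^ 2 + η k ^ 2 * Cf ^ 2)) :=
          Finset.sum_le_sum fun k _ => hk1 k
      _ = (∑ k ∈ Finset.range (N + 1), lam k * (A k - A (k + 1))) + noise :=
          Finset.sum_add_distrib
      _ ≤ lam N * (4 * M ^ 2 / pmin) + noise := by
          have h := htel N
          have h2 := mul_nonneg (hlamnn N) (hA0 (N + 1))
          linarith
  -- the averaged iterate
  set S : ℝ := ∑ k ∈ Finset.range (N + 1), γ k ^ r with hS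
  have hSpos : 0 < S :=
    Finset.sum_pos (fun k _ => Real.rpow_pos_of_pos (hγpos k) r) ⟨0, by simp⟩
  have hIbar : (∫ ω, f (S⁻¹ • ∑ k ∈ Finset.range (N + 1), γ k ^ r • x k ω) ∂μ)
      ≤ S⁻¹ * ∑ k ∈ Finset.range (N + 1), γ k ^ r * B k := by
    set trunc : (Fin (N + 1) → Fin d) → ∀ k : ℕ, Fin k → Fin d :=
      fun a k j => a ⟨j.1 % (N + 1), Nat.mod_lt _ (Nat.succ_pos N)⟩ with htrdef
    have htr : ∀ (k : ℕ), k ≤ N + 1 → ∀ ω,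
        Φ k (trunc (fun j : Fin (N + 1) => ι j ω) k) = x k ω := by
      intro k hk ω
      rw [hxΦ k ω]
      have harg : (trunc (fun j : Fin (N + 1) => ι j ω) k) = (fun j : Fin k => ι j ω) := by
        funext j
        simp only [htrdef]
        rw [Nat.mod_eq_of_lt (lt_of_lt_of_le j.2 hk)]
      rw [harg]
    have hBk : ∀ k ∈ Finset.range (N + 1),
        ∑ a : Fin (N + 1) → Fin d, (∏ j, p (a j)) * f (Φ k (trunc a k)) = B k := by
      intro k hk
      have hk' : k ≤ N + 1 := le_of_lt (Finset.mem_range.mp hk)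
      have e1 := integral_history μ p (fun i => (hp i).le) ι hιmeas hindep hdist (N + 1)
        (fun a => f (Φ k (trunc a k)))
      have e2 := integral_history μ p (fun i => (hp i).le) ι hιmeas hindep hdist k
        (fun b => f (Φ k b))
      calc ∑ a : Fin (N + 1) → Fin d, (∏ j, p (a j)) * f (Φ k (trunc a k))
          = ∫ ω, f (Φ k (trunc (fun j : Fin (N + 1) => ι j ω) k)) ∂μ := e1.symm
        _ = ∫ ω, f (Φ k (fun j : Fin k => ι j ω)) ∂μ :=
            congrArg (MeasureTheory.integral μ) (funext fun ω => by
              rw [htr k hk' ω, hxΦ k ω])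
        _ = B k := e2
    have e5 : (∫ ω, f (S⁻¹ • ∑ k ∈ Finset.range (N + 1), γ k ^ r • x k ω) ∂μ)
        = ∑ a : Fin (N + 1) → Fin d, (∏ j, p (a j))
            * f (S⁻¹ • ∑ k ∈ Finset.range (N + 1), γ k ^ r • Φ k (trunc a k)) := by
      have e4 := integral_history μ p (fun i => (hp i).le) ι hιmeas hindep hdist (N + 1)
        (fun a => f (S⁻¹ • ∑ k ∈ Finset.range (N + 1), γ k ^ r • Φ k (trunc a k)))
      rw [← e4]
      refine congrArg (MeasureTheory.integral μ) (funext fun ω => ?_)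
      have h6 : ∀ k ∈ Finset.range (N + 1), γ k ^ r • x k ω
          = γ k ^ r • Φ k (trunc (fun j : Fin (N + 1) => ι j ω) k) := fun k hk => by
        rw [htr k (le_of_lt (Finset.mem_range.mp hk)) ω]
      rw [Finset.sum_congr rfl h6]
    have hJ : ∀ a : Fin (N + 1) → Fin d,
        f (S⁻¹ • ∑ k ∈ Finset.range (N + 1), γ k ^ r • Φ k (trunc a k))
          ≤ ∑ k ∈ Finset.range (N + 1), (S⁻¹ * γ k ^ r) * f (Φ k (trunc a k)) := by
      intro a
      have h1 : S⁻¹ • ∑ k ∈ Finset.range (N + 1), γ k ^ r • Φ k (trunc a k)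
          = ∑ k ∈ Finset.range (N + 1), (S⁻¹ * γ k ^ r) • Φ k (trunc a k) := by
        rw [Finset.smul_sum]
        exact Finset.sum_congr rfl fun k _ => smul_smul _ _ _
      rw [h1]
      refine hf.map_sum_le (fun k _ => ?_) ?_ (fun k _ => Set.mem_univ _)
      · have h2 := Real.rpow_pos_of_pos (hγpos k) r
        positivity
      · rw [← Finset.mul_sum]
        exact inv_mul_cancel₀ hSpos.ne'
    rw [e5]
    calc ∑ a : Fin (N + 1) → Fin d, (∏ j, p (a j))
          * f (S⁻¹ • ∑ k ∈ Finset.range (N + 1), γ k ^ r • Φ k (trunc a k))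
        ≤ ∑ a : Fin (N + 1) → Fin d, (∏ j, p (a j))
            * ∑ k ∈ Finset.range (N + 1), (S⁻¹ * γ k ^ r) * f (Φ k (trunc a k)) :=
          Finset.sum_le_sum fun a _ =>
            mul_le_mul_of_nonneg_left (hJ a) (hwnonneg a)
      _ = ∑ a : Fin (N + 1) → Fin d, ∑ k ∈ Finset.range (N + 1),
            (∏ j, p (a j)) * ((S⁻¹ * γ k ^ r) * f (Φ k (trunc a k))) :=
          Finset.sum_congr rfl fun a _ => Finset.mul_sum _ _ _
      _ = ∑ k ∈ Finset.range (N + 1), ∑ a : Fin (N + 1) → Fin d,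
            (∏ j, p (a j)) * ((S⁻¹ * γ k ^ r) * f (Φ k (trunc a k))) := Finset.sum_comm
      _ = ∑ k ∈ Finset.range (N + 1), (S⁻¹ * γ k ^ r)
            * ∑ a : Fin (N + 1) → Fin d, (∏ j, p (a j)) * f (Φ k (trunc a k)) := by
          refine Finset.sum_congr rfl fun k _ => ?_
          rw [Finset.mul_sum]
          exact Finset.sum_congr rfl fun a _ => by ring
      _ = ∑ k ∈ Finset.range (N + 1), (S⁻¹ * γ k ^ r) * B k :=
          Finset.sum_congr rfl fun k hk => by rw [hBk k hk]
      _ = S⁻¹ * ∑ k ∈ Finset.range (N + 1), γ k ^ r * B k := by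
          rw [Finset.mul_sum]
          exact Finset.sum_congr rfl fun k _ => by ring
  -- final arithmetic
  have hfinal : S⁻¹ * ∑ k ∈ Finset.range (N + 1), γ k ^ r * B k - f xstar
      ≤ (4 * M ^ 2 * γ N ^ (r - 1) / η N + noise) / (pmin * S) := by
    have hpne : pmin ≠ 0 := hpmin_pos.ne'
    have hηne : η N ≠ 0 := (hηpos N).ne'
    have hT : lam N * (4 * M ^ 2 / pmin) + noise
        ≤ (4 * M ^ 2 * γ N ^ (r - 1) / η N + noise) / pmin := by
      rw [le_div_iff₀ hpmin_pos]
      have h1 : lam N * (4 * M ^ 2 / pmin) * pmin = 2 * (M ^ 2 * γ N ^ (r - 1) / η N) := by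
        rw [hlam]
        field_simp
        ring
      have h2 : 0 ≤ M ^ 2 * γ N ^ (r - 1) / η N := by
        have := hηpos N; have := Real.rpow_pos_of_pos (hγpos N) (r - 1); positivity
      have h5 : (lam N * (4 * M ^ 2 / pmin) + noise) * pmin
          = lam N * (4 * M ^ 2 / pmin) * pmin + noise * pmin := by ring
      rw [h5, h1]
      have h6 : noise * pmin ≤ noise := mul_le_of_le_one_right hnoise0 hpmin1
      have h7 : 2 * (M ^ 2 * γ N ^ (r - 1) / η N) ≤ 4 * M ^ 2 * γ N ^ (r - 1) / η N := by
        have h8 : 4 * M ^ 2 * γ N ^ (r - 1) / η N = 4 * (M ^ 2 * γ N ^ (r - 1) / η N) := by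
          ring
        rw [h8]; linarith
      linarith
    have hsplit : ∑ k ∈ Finset.range (N + 1), γ k ^ r * (B k - f xstar)
        = (∑ k ∈ Finset.range (N + 1), γ k ^ r * B k) - S * f xstar := by
      rw [hS, Finset.sum_mul, ← Finset.sum_sub_distrib]
      exact Finset.sum_congr rfl fun k _ => by ring
    have h3 : S⁻¹ * ∑ k ∈ Finset.range (N + 1), γ k ^ r * B k - f xstar
        = S⁻¹ * ∑ k ∈ Finset.range (N + 1), γ k ^ r * (B k - f xstar) := by
      rw [hsplit, mul_sub, ← mul_assoc, inv_mul_cancel₀ hSpos.ne', one_mul]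
    rw [h3]
    calc S⁻¹ * ∑ k ∈ Finset.range (N + 1), γ k ^ r * (B k - f xstar)
        ≤ S⁻¹ * (lam N * (4 * M ^ 2 / pmin) + noise) :=
          mul_le_mul_of_nonneg_left hsum1 (inv_nonneg.2 hSpos.le)
      _ ≤ S⁻¹ * ((4 * M ^ 2 * γ N ^ (r - 1) / η N + noise) / pmin) :=
          mul_le_mul_of_nonneg_left hT (inv_nonneg.2 hSpos.le)
      _ = (4 * M ^ 2 * γ N ^ (r - 1) / η N + noise) / (pmin * S) := by
          rw [inv_mul_eq_div, div_div]
  linarith [hIbar, hfinal]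
end

section
/- Consider the aRB-IRG algorithm under the following assumptions: each X_i is nonempty, closed, and convex; the set X = X_1 × ⋯ × X_d is bounded with ‖x‖ ≤ M for all x ∈ X; f is convex with ‖∇̃f(x)‖ ≤ C_f for all x ∈ X; F is continuous and monotone on X with ‖F(x)‖ ≤ C_F for all x ∈ X; SOL(X,F) is nonempty; and the sequences (γ_k) and (η_k) are strictly positive and nonincreasing. Then for any N ≥ 1, the averaged iterate satisfies E[GAP(x̄_N)] ≤ (4M² γ_N^{r−1} + Σ_{k=0}^{N} γ_k^r (2 p_min η_k C_f M + γ_k C_F² + γ_k η_k² C_f²)) / (p_min Σ_{k=0}^{N} γ_k^r). -/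
open scoped RealInnerProductSpace
open MeasureTheory ProbabilityTheory

/-- The dual gap function `GAP(x) := sup_{y ∈ X} ⟨F(y), x − y⟩`. -/
noncomputable def dualGap {d : ℕ} {n : Fin d → ℕ} (X : Set (BlockSpace d n))
    (F : BlockSpace d n → BlockSpace d n) (x : BlockSpace d n) : ℝ :=
  sSup ((fun y => ⟪F y, x - y⟫) '' X)


set_option linter.unusedVariables false
set_option linter.unusedSectionVars false

section Hilbert
variable {H : Type*} [NormedAddCommGroup H] [InnerProductSpace ℝ H]

lemma nearest_inner_nonpos {C : Set H} (hC : Convex ℝ C) {z P : H} (hPC : P ∈ C)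
    (hmin : ∀ w ∈ C, ‖z - P‖ ≤ ‖z - w‖) {y : H} (hy : y ∈ C) :
    ⟪z - P, y - P⟫ ≤ 0 := by
  by_contra hlt
  push_neg at hlt
  -- pick t small
  set a : ℝ := ⟪z - P, y - P⟫ with ha
  have hb : (0:ℝ) ≤ ‖y - P‖ ^ 2 := sq_nonneg _
  set t : ℝ := min 1 (a / (‖y - P‖ ^ 2 + 1)) with ht
  have ht0 : 0 < t := by
    apply lt_min one_pos
    positivity
  have ht1 : t ≤ 1 := min_le_left _ _
  have hw : P + t • (y - P) ∈ C := by
    have := hC hPC hy (by linarith : (0:ℝ) ≤ 1 - t) ht0.le (by ring)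
    convert this using 1
    module
  have h1 : ‖z - P‖ ^ 2 ≤ ‖z - (P + t • (y - P))‖ ^ 2 := by
    have := hmin _ hw
    exact pow_le_pow_left₀ (norm_nonneg _) this 2
  have h2 : ‖z - (P + t • (y - P))‖ ^ 2
      = ‖z - P‖ ^ 2 - 2 * t * a + t ^ 2 * ‖y - P‖ ^ 2 := by
    have : z - (P + t • (y - P)) = (z - P) - t • (y - P) := by abel
    rw [this, norm_sub_sq_real, real_inner_smul_right, norm_smul]
    simp [ha, mul_pow, abs_of_nonneg ht0.le]
    ring
  rw [h2] at h1
  have h3 : 2 * t * a ≤ t ^ 2 * ‖y - P‖ ^ 2 := by linarith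
  have h4 : 2 * a ≤ t * ‖y - P‖ ^ 2 := by
    have := (mul_le_mul_iff_right₀ ht0).mp (by rw [pow_two] at h3; linarith [h3] : t * (2 * a) ≤ t * (t * ‖y - P‖ ^ 2))
    linarith
  have h5 : t * ‖y - P‖ ^ 2 ≤ a := by
    calc t * ‖y - P‖ ^ 2 ≤ (a / (‖y - P‖ ^ 2 + 1)) * ‖y - P‖ ^ 2 := by
          apply mul_le_mul_of_nonneg_right (min_le_right _ _) hb
      _ ≤ a := by
          rw [div_mul_eq_mul_div, div_le_iff₀ (by positivity)]
          nlinarith [hlt]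
  linarith

lemma nearest_dist_le {C : Set H} (hC : Convex ℝ C) {z P : H} (hPC : P ∈ C)
    (hmin : ∀ w ∈ C, ‖z - P‖ ≤ ‖z - w‖) {y : H} (hy : y ∈ C) :
    ‖P - y‖ ≤ ‖z - y‖ := by
  have hvi := nearest_inner_nonpos hC hPC hmin hy
  have hexp : ‖z - y‖ ^ 2 = ‖z - P‖ ^ 2 + 2 * ⟪z - P, P - y⟫ + ‖P - y‖ ^ 2 := by
    have : z - y = (z - P) + (P - y) := by abel
    rw [this, norm_add_sq_real]
  have hip : 0 ≤ ⟪z - P, P - y⟫ := by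
    have : ⟪z - P, P - y⟫ = - ⟪z - P, y - P⟫ := by
      rw [← inner_neg_right]; congr 1; abel
    linarith [this ▸ neg_nonneg.mpr hvi]
  have : ‖P - y‖ ^ 2 ≤ ‖z - y‖ ^ 2 := by nlinarith [sq_nonneg ‖z - P‖]
  exact (pow_le_pow_iff_left₀ (norm_nonneg _) (norm_nonneg _) two_ne_zero).mp this

end Hilbert

lemma abel_sum_bound (a b : ℕ → ℝ) (B : ℝ)
    (hamono : ∀ k, a k ≤ a (k + 1)) (ha0 : 0 ≤ a 0)
    (hb0 : ∀ k, 0 ≤ b k) (hbB : ∀ k, b k ≤ B) :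
    ∀ N, ∑ k ∈ Finset.range (N + 1), a k * (b k - b (k + 1)) ≤ a N * B - a N * b (N + 1) := by
  have hak : ∀ k, 0 ≤ a k := by
    intro k; induction k with
    | zero => exact ha0
    | succ m ih => exact ih.trans (hamono m)
  intro N
  induction N with
  | zero =>
    rw [Finset.sum_range_one]
    have := hbB 0
    nlinarith [hak 0, hb0 1]
  | succ m ih =>
    rw [Finset.sum_range_succ]
    have h1 : a m * B - a m * b (m + 1) + a (m + 1) * (b (m + 1) - b (m + 2))
        ≤ a (m + 1) * B - a (m + 1) * b (m + 2) := by
      nlinarith [hamono m, hb0 (m + 1), hbB (m + 1)]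
    linarith

section IntegralComp
variable {Ω : Type*} [MeasurableSpace Ω] (μ : MeasureTheory.Measure Ω) [IsFiniteMeasure μ]
variable {κ : Type*} [Fintype κ] [MeasurableSpace κ] [MeasurableSingletonClass κ]

lemma comp_eq_sum_indicator (T : Ω → κ) (φ : κ → ℝ) :
    (fun ω => φ (T ω)) = fun ω => ∑ c, Set.indicator (T ⁻¹' {c}) (fun _ => φ c) ω := by
  funext ω
  rw [Finset.sum_eq_single (T ω)]
  · simp [Set.indicator_of_mem, Set.mem_preimage]
  · intro c _ hc
    apply Set.indicator_of_notMem
    simp [Set.mem_preimage]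
    exact fun h => hc h.symm
  · simp

lemma integrable_comp_finite {T : Ω → κ} (hT : Measurable T) (φ : κ → ℝ) :
    MeasureTheory.Integrable (fun ω => φ (T ω)) μ := by
  rw [comp_eq_sum_indicator]
  apply MeasureTheory.integrable_finset_sum
  intro c _
  exact (MeasureTheory.integrable_const (φ c)).indicator (hT (MeasurableSet.singleton c))

lemma integral_comp_finite {T : Ω → κ} (hT : Measurable T) (φ : κ → ℝ) :
    ∫ ω, φ (T ω) ∂μ = ∑ c, (μ (T ⁻¹' {c})).toReal * φ c := by
  rw [comp_eq_sum_indicator]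
  rw [MeasureTheory.integral_finset_sum _ (fun c _ =>
    (MeasureTheory.integrable_const (φ c)).indicator (hT (MeasurableSet.singleton c)))]
  congr 1
  funext c
  rw [MeasureTheory.integral_indicator_const _ (hT (MeasurableSet.singleton c))]
  simp [mul_comm, Measure.real]

end IntegralComp

section PiLpSingle
variable {d : ℕ} {E : Fin d → Type*} [∀ i, NormedAddCommGroup (E i)]
  [∀ i, InnerProductSpace ℝ (E i)]

noncomputable def piSingle (i : Fin d) (a : E i) : PiLp 2 E :=
  (WithLp.equiv 2 (∀ j, E j)).symm (Pi.single i a)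

lemma piSingle_apply_self (i : Fin d) (a : E i) : piSingle i a i = a := by
  simp [piSingle]

lemma piSingle_apply_ne {i j : Fin d} (hj : j ≠ i) (a : E i) : piSingle i a j = 0 := by
  simp [piSingle, Pi.single_eq_of_ne hj]

lemma inner_single_left_pi (i : Fin d) (a : E i) (w : PiLp 2 E) :
    ⟪piSingle i a, w⟫ = ⟪a, w i⟫ := by
  rw [PiLp.inner_apply]
  rw [Finset.sum_eq_single i]
  · rw [piSingle_apply_self]
  · intro j _ hj
    rw [piSingle_apply_ne hj, inner_zero_left]
  · simp

lemma norm_single_pi (i : Fin d) (a : E i) :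
    ‖piSingle i a‖ ^ 2 = ‖a‖ ^ 2 := by
  rw [PiLp.norm_sq_eq_of_L2]
  rw [Finset.sum_eq_single i]
  · rw [piSingle_apply_self]
  · intro j _ hj
    rw [piSingle_apply_ne hj, norm_zero]
    simp
  · simp

lemma sum_piSingle (w : PiLp 2 E) : ∑ i, piSingle i (w i) = w := by
  refine PiLp.ext (fun j => ?_)
  rw [WithLp.ofLp_sum, Finset.sum_apply]
  rw [Finset.sum_eq_single j]
  · rw [piSingle_apply_self]
  · intro i _ hi
    exact piSingle_apply_ne (Ne.symm hi) _
  · simp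

end PiLpSingle

def snocEquiv (d m : ℕ) : ((Fin m → Fin d) × Fin d) ≃ (Fin (m + 1) → Fin d) where
  toFun ci := Fin.snoc ci.1 ci.2
  invFun c := (Fin.init c, c (Fin.last m))
  left_inv ci := by simp
  right_inv c := by simp

lemma sum_prod_paths {d : ℕ} (p : Fin d → ℝ) (hpsum : ∑ i, p i = 1) :
    ∀ m, ∑ c : Fin m → Fin d, ∏ j, p (c j) = 1 := by
  intro m
  induction m with
  | zero => simp
  | succ m ih =>
    rw [← Equiv.sum_comp (snocEquiv d m) (fun c => ∏ j, p (c j)), Fintype.sum_prod_type]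
    have : ∀ (c' : Fin m → Fin d) (i : Fin d),
        ∏ j, p ((Fin.snoc c' i : Fin (m+1) → Fin d) j) = (∏ j, p (c' j)) * p i := by
      intro c' i
      rw [Fin.prod_univ_castSucc]
      simp [Fin.snoc_castSucc, Fin.snoc_last]
    calc ∑ c', ∑ i, ∏ j, p ((snocEquiv d m) (c', i) j)
        = ∑ c' : Fin m → Fin d, ∑ i, (∏ j, p (c' j)) * p i := by
          apply Finset.sum_congr rfl; intro c' _
          apply Finset.sum_congr rfl; intro i _
          exact this c' i
      _ = ∑ c' : Fin m → Fin d, (∏ j, p (c' j)) := by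
          apply Finset.sum_congr rfl; intro c' _
          rw [← Finset.mul_sum, hpsum, mul_one]
      _ = 1 := ih

section Defs
variable {d : ℕ} {n : Fin d → ℕ}

noncomputable def hVec (F g : BlockSpace d n → BlockSpace d n) (e : ℝ)
    (z : BlockSpace d n) : BlockSpace d n := F z + e • g z

noncomputable def vVec (p : Fin d → ℝ) (pmin : ℝ)
    (F g : BlockSpace d n → BlockSpace d n) (e : ℝ) (i : Fin d)
    (z : BlockSpace d n) : BlockSpace d n :=
  (pmin / p i) • piSingle i (hVec F g e z i) - pmin • hVec F g e z

noncomputable def pathX (proj : ∀ i, EuclideanSpace ℝ (Fin (n i)) → EuclideanSpace ℝ (Fin (n i)))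
    (F g : BlockSpace d n → BlockSpace d n) (γ η : ℕ → ℝ) (x0 : BlockSpace d n) :
    (k : ℕ) → (Fin k → Fin d) → BlockSpace d n
  | 0, _ => x0
  | (k+1), c =>
    let z := pathX proj F g γ η x0 k (c ∘ Fin.castSucc)
    let i := c (Fin.last k)
    WithLp.toLp 2 (Function.update z i (proj i (z i - γ k • (hVec F g (η k) z i))))

noncomputable def pathU (proj : ∀ i, EuclideanSpace ℝ (Fin (n i)) → EuclideanSpace ℝ (Fin (n i)))
    (p : Fin d → ℝ) (pmin : ℝ) (F g : BlockSpace d n → BlockSpace d n)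
    (γ η : ℕ → ℝ) (x0 : BlockSpace d n) :
    (k : ℕ) → (Fin k → Fin d) → BlockSpace d n
  | 0, _ => x0
  | (k+1), c =>
    let c' := c ∘ Fin.castSucc
    let uu := pathU proj p pmin F g γ η x0 k c'
    let vv := vVec p pmin F g (η k) (c (Fin.last k)) (pathX proj F g γ η x0 k c')
    WithLp.toLp 2 (fun i => proj i (uu i + γ k • vv i))

noncomputable def theta (proj : ∀ i, EuclideanSpace ℝ (Fin (n i)) → EuclideanSpace ℝ (Fin (n i)))
    (p : Fin d → ℝ) (pmin : ℝ) (F g : BlockSpace d n → BlockSpace d n)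
    (γ η : ℕ → ℝ) (x0 : BlockSpace d n) (r : ℝ) (k : ℕ)
    (c : Fin (k + 1) → Fin d) : ℝ :=
  let c' := c ∘ Fin.castSucc
  let i := c (Fin.last k)
  let z := pathX proj F g γ η x0 k c'
  let vv := vVec p pmin F g (η k) i z
  γ k ^ r * γ k / 2 * ((pmin / p i) * ‖hVec F g (η k) z i‖ ^ 2 + ‖vv‖ ^ 2)
    + γ k ^ r * ⟪vv, pathU proj p pmin F g γ η x0 k c' - z⟫

lemma pathX_succ {proj : ∀ i, EuclideanSpace ℝ (Fin (n i)) → EuclideanSpace ℝ (Fin (n i))}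
    {F g : BlockSpace d n → BlockSpace d n} {γ η : ℕ → ℝ} {x0 : BlockSpace d n}
    (k : ℕ) (c : Fin (k + 1) → Fin d) :
    pathX proj F g γ η x0 (k + 1) c
      = Function.update (pathX proj F g γ η x0 k (c ∘ Fin.castSucc)) (c (Fin.last k))
          (proj (c (Fin.last k)) ((pathX proj F g γ η x0 k (c ∘ Fin.castSucc)) (c (Fin.last k))
            - γ k • (hVec F g (η k) (pathX proj F g γ η x0 k (c ∘ Fin.castSucc)) (c (Fin.last k))))) := rfl

lemma pathU_succ {proj : ∀ i, EuclideanSpace ℝ (Fin (n i)) → EuclideanSpace ℝ (Fin (n i))}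
    {p : Fin d → ℝ} {pmin : ℝ} {F g : BlockSpace d n → BlockSpace d n}
    {γ η : ℕ → ℝ} {x0 : BlockSpace d n} (k : ℕ) (c : Fin (k + 1) → Fin d) :
    pathU proj p pmin F g γ η x0 (k + 1) c
      = fun i => proj i ((pathU proj p pmin F g γ η x0 k (c ∘ Fin.castSucc)) i
          + γ k • (vVec p pmin F g (η k) (c (Fin.last k))
              (pathX proj F g γ η x0 k (c ∘ Fin.castSucc))) i) := rfl

end Defs

set_option maxHeartbeats 1000000 in
theorem aRBIRG_aux {d : ℕ} {n : Fin d → ℕ}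
    {Ω : Type*} [MeasurableSpace Ω] (μ : Measure Ω) [IsProbabilityMeasure μ]
    [MeasurableSpace (BlockSpace d n)] [BorelSpace (BlockSpace d n)]
    (Xs : ∀ i, Set (EuclideanSpace ℝ (Fin (n i))))
    (hXne : ∀ i, (Xs i).Nonempty) (hXcl : ∀ i, IsClosed (Xs i)) (hXcv : ∀ i, Convex ℝ (Xs i))
    (X : Set (BlockSpace d n)) (hX : X = {x | ∀ i, x i ∈ Xs i})
    (M : ℝ) (hM : ∀ x ∈ X, ‖x‖ ≤ M)
    (g : BlockSpace d n → BlockSpace d n)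
    (Cf : ℝ) (hCf : ∀ x ∈ X, ‖g x‖ ≤ Cf)
    (F : BlockSpace d n → BlockSpace d n)
    (hmono : ∀ x ∈ X, ∀ y ∈ X, 0 ≤ ⟪F x - F y, x - y⟫)
    (CF : ℝ) (hCF : ∀ x ∈ X, ‖F x‖ ≤ CF)
    (p : Fin d → ℝ) (hp : ∀ i, 0 < p i) (hpsum : ∑ i, p i = 1)
    (pmin : ℝ) (hpmin : IsLeast (Set.range p) pmin)
    (ι : ℕ → Ω → Fin d) (hιmeas : ∀ k, Measurable (ι k))
    (hindep : iIndepFun ι μ)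
    (hdist : ∀ k i, μ {ω | ι k ω = i} = ENNReal.ofReal (p i))
    (γ η : ℕ → ℝ) (hγpos : ∀ k, 0 < γ k) (hηpos : ∀ k, 0 < η k)
    (hγmono : ∀ k, γ (k + 1) ≤ γ k)
    (r : ℝ) (hr1 : r < 1)
    (proj : ∀ i, EuclideanSpace ℝ (Fin (n i)) → EuclideanSpace ℝ (Fin (n i)))
    (hproj : ∀ i z, proj i z ∈ Xs i ∧ ∀ w ∈ Xs i, ‖z - proj i z‖ ≤ ‖z - w‖)
    (x0 : BlockSpace d n) (hx0X : x0 ∈ X)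
    (x : ℕ → Ω → BlockSpace d n)
    (hx0 : ∀ ω, x 0 ω = x0)
    (hxrec : ∀ k ω,
      (x (k + 1) ω) (ι k ω) = proj (ι k ω) ((x k ω) (ι k ω)
        - γ k • (F (x k ω) (ι k ω) + η k • g (x k ω) (ι k ω)))
      ∧ ∀ j, j ≠ ι k ω → x (k + 1) ω j = x k ω j)
    (N : ℕ) :
    (∫ ω, dualGap X F ((∑ k ∈ Finset.range (N + 1), γ k ^ r)⁻¹
        • ∑ k ∈ Finset.range (N + 1), γ k ^ r • x k ω) ∂μ)
      ≤ (4 * M ^ 2 * γ N ^ (r - 1)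
          + ∑ k ∈ Finset.range (N + 1),
              γ k ^ r * (2 * pmin * η k * Cf * M + γ k * CF ^ 2 + γ k * η k ^ 2 * Cf ^ 2))
        / (pmin * ∑ k ∈ Finset.range (N + 1), γ k ^ r) := by
  classical
  obtain ⟨i0, hi0⟩ := hpmin.1
  have hpminle : ∀ i, pmin ≤ p i := fun i => hpmin.2 ⟨i, rfl⟩
  have hpmin0 : 0 < pmin := hi0 ▸ hp i0
  have hpmin1 : pmin ≤ 1 := by
    calc pmin ≤ p i0 := hpminle i0
    _ ≤ ∑ i, p i := Finset.single_le_sum (fun i _ => (hp i).le) (Finset.mem_univ i0)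
    _ = 1 := hpsum
  have hγr : ∀ k, 0 < γ k ^ r := fun k => Real.rpow_pos_of_pos (hγpos k) r
  set S := ∑ k ∈ Finset.range (N + 1), γ k ^ r with hSdef
  have hSpos : 0 < S := Finset.sum_pos (fun k _ => hγr k) ⟨0, by simp⟩
  have hM0 : 0 ≤ M := le_trans (norm_nonneg x0) (hM x0 hx0X)
  have hCf0 : 0 ≤ Cf := le_trans (norm_nonneg _) (hCf x0 hx0X)
  have hCF0 : 0 ≤ CF := le_trans (norm_nonneg _) (hCF x0 hx0X)
  have hmemX : ∀ z : BlockSpace d n, (∀ i, z i ∈ Xs i) → z ∈ X := by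
    intro z h; rw [hX]; exact h
  have hmemX' : ∀ z, z ∈ X → ∀ i, z i ∈ Xs i := by
    intro z h; rw [hX] at h; exact h
  have hdist2M : ∀ z ∈ X, ∀ y ∈ X, ‖z - y‖ ≤ 2 * M := by
    intro z hz y hy
    calc ‖z - y‖ ≤ ‖z‖ + ‖y‖ := norm_sub_le _ _
    _ ≤ 2 * M := by have := hM z hz; have := hM y hy; linarith
  -- path memberships
  have hPXmem : ∀ k c, pathX proj F g γ η x0 k c ∈ X := by
    intro k
    induction k with
    | zero => intro c; exact hx0X
    | succ m ih =>
      intro c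
      apply hmemX
      intro i
      rw [pathX_succ]
      rcases eq_or_ne i (c (Fin.last m)) with h | h
      · subst h; rw [Function.update_self]; exact (hproj _ _).1
      · rw [Function.update_of_ne h]; exact hmemX' _ (ih _) i
  have hPUmem : ∀ k c, pathU proj p pmin F g γ η x0 k c ∈ X := by
    intro k
    induction k with
    | zero => intro c; exact hx0X
    | succ m ih =>
      intro c
      apply hmemX
      intro i
      rw [pathU_succ]
      exact (hproj _ _).1
  -- factorization of iterates through paths
  have hx_eq : ∀ k ω, x k ω = pathX proj F g γ η x0 k (fun j : Fin k => ι j ω) := by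
    intro k
    induction k with
    | zero => intro ω; rw [hx0]; rfl
    | succ m ih =>
      intro ω
      apply WithLp.ofLp_injective
      rw [pathX_succ]
      have hcast : ((fun j : Fin (m+1) => ι j ω) ∘ Fin.castSucc) = fun j : Fin m => ι j ω := by
        funext j; simp [Fin.coe_castSucc]
      rw [hcast, ← ih ω]
      simp only [Fin.val_last]
      funext i
      rcases eq_or_ne i (ι m ω) with h | h
      · subst h
        rw [Function.update_self]
        rw [(hxrec m ω).1]
        rfl
      · rw [Function.update_of_ne h]
        exact (hxrec m ω).2 i h
  -- bound on the regularized map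
  have hhz : ∀ k, ∀ z ∈ X, ‖hVec F g (η k) z‖ ≤ CF + η k * Cf := by
    intro k z hz
    calc ‖F z + η k • g z‖ ≤ ‖F z‖ + ‖η k • g z‖ := norm_add_le _ _
    _ ≤ CF + η k * Cf := by
        rw [norm_smul, Real.norm_eq_abs, abs_of_pos (hηpos k)]
        have := hCF z hz
        have := hCf z hz
        have := (hηpos k).le
        nlinarith
  -- the master pathwise inequality
  have master : ∀ ω, ∀ y ∈ X,
      pmin * S * ⟪F y, ((S⁻¹ • ∑ k ∈ Finset.range (N+1), γ k ^ r • x k ω) - y)⟫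
      ≤ 4 * M ^ 2 * γ N ^ (r - 1)
        + (∑ k ∈ Finset.range (N+1), γ k ^ r * (2 * pmin * η k * Cf * M))
        + ∑ k ∈ Finset.range (N+1),
            theta proj p pmin F g γ η x0 r k (fun j : Fin (k+1) => ι j ω) := by
    intro ω y hyX
    have hyblk : ∀ i, y i ∈ Xs i := hmemX' y hyX
    -- iterate membership and pathU composition
    have hxX : ∀ k, x k ω ∈ X := fun k => by
      rw [hx_eq k ω]; exact hPXmem k _
    set uu : ℕ → BlockSpace d n :=
      fun k => pathU proj p pmin F g γ η x0 k (fun j : Fin k => ι (j : ℕ) ω) with huu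
    have huuX : ∀ k, uu k ∈ X := fun k => hPUmem k _
    have hu_succ : ∀ k, uu (k + 1) = fun i => proj i (uu k i
        + γ k • (vVec p pmin F g (η k) (ι k ω) (x k ω)) i) := by
      intro k
      show (pathU proj p pmin F g γ η x0 (k+1) (fun j : Fin (k+1) => ι (j : ℕ) ω)).ofLp = _
      rw [pathU_succ]
      have hcast : ((fun j : Fin (k+1) => ι (j : ℕ) ω) ∘ Fin.castSucc)
          = fun j : Fin k => ι (j : ℕ) ω := by
        funext j; simp [Fin.coe_castSucc]
      rw [hcast]
      simp only [Fin.val_last]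
      rw [← hx_eq k ω]
    -- Lyapunov functions
    set Df : ℕ → ℝ := fun k => ∑ j, (pmin / p j) * ‖x k ω j - y j‖ ^ 2 with hDf
    set Ef : ℕ → ℝ := fun k => ‖uu k - y‖ ^ 2 with hEf
    have hDle : ∀ k, Df k ≤ 4 * M ^ 2 := by
      intro k
      have h1 : Df k ≤ ∑ j, ‖x k ω j - y j‖ ^ 2 := by
        apply Finset.sum_le_sum
        intro j _
        apply mul_le_of_le_one_left (sq_nonneg _)
        rw [div_le_one (hp j)]
        exact hpminle j
      have h2 : ∀ j, x k ω j - y j = (x k ω - y) j := fun j => rfl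
      have h3 : ∑ j, ‖x k ω j - y j‖ ^ 2 = ‖x k ω - y‖ ^ 2 := by
        rw [Finset.sum_congr rfl (fun j _ => by rw [h2 j])]
        exact (PiLp.norm_sq_eq_of_L2 _ _).symm
      have h4 : ‖x k ω - y‖ ≤ 2 * M := hdist2M _ (hxX k) _ hyX
      have h5 : ‖x k ω - y‖ ^ 2 ≤ (2 * M) ^ 2 := pow_le_pow_left₀ (norm_nonneg _) h4 2
      calc Df k ≤ ‖x k ω - y‖ ^ 2 := h1.trans (le_of_eq h3)
        _ ≤ (2 * M) ^ 2 := h5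
        _ = 4 * M ^ 2 := by ring
    have hD0 : ∀ k, 0 ≤ Df k := by
      intro k
      apply Finset.sum_nonneg
      intro j _
      exact mul_nonneg (div_nonneg hpmin0.le (hp j).le) (sq_nonneg _)
    have hEle : ∀ k, Ef k ≤ 4 * M ^ 2 := by
      intro k
      have h4 : ‖uu k - y‖ ≤ 2 * M := hdist2M _ (huuX k) _ hyX
      have h5 : ‖uu k - y‖ ^ 2 ≤ (2 * M) ^ 2 := pow_le_pow_left₀ (norm_nonneg _) h4 2
      calc Ef k ≤ (2 * M) ^ 2 := h5
        _ = 4 * M ^ 2 := by ring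
    have hE0 : ∀ k, 0 ≤ Ef k := fun k => sq_nonneg _
    -- the per-step inequality, unscaled
    have step : ∀ k, 2 * γ k * (pmin * ⟪F y, x k ω - y⟫)
        ≤ ((Df k + Ef k) - (Df (k+1) + Ef (k+1)))
          + γ k ^ 2 * ((pmin / p (ι k ω)) * ‖hVec F g (η k) (x k ω) (ι k ω)‖ ^ 2
              + ‖vVec p pmin F g (η k) (ι k ω) (x k ω)‖ ^ 2)
          + 2 * γ k * ⟪vVec p pmin F g (η k) (ι k ω) (x k ω), uu k - x k ω⟫
          + 4 * γ k * pmin * η k * Cf * M := by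
      intro k
      set i : Fin d := ι k ω with hi
      set hk : BlockSpace d n := hVec F g (η k) (x k ω) with hhk
      set vv : BlockSpace d n := vVec p pmin F g (η k) i (x k ω) with hvv
      have hzX : x k ω ∈ X := hxX k
      have hkapp : hk i = F (x k ω) i + η k • g (x k ω) i := rfl
      -- block projection inequality
      have hblock : ‖x (k+1) ω i - y i‖ ^ 2
          ≤ ‖x k ω i - y i‖ ^ 2 - 2 * γ k * ⟪hk i, x k ω i - y i⟫ + γ k ^ 2 * ‖hk i‖ ^ 2 := by
        have hrec := (hxrec k ω).1
        rw [← hi] at hrec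
        have hrec' : x (k+1) ω i = proj i (x k ω i - γ k • hk i) := by
          rw [hrec, hkapp]
        have hproj_le : ‖proj i (x k ω i - γ k • hk i) - y i‖ ≤ ‖(x k ω i - γ k • hk i) - y i‖ :=
          nearest_dist_le (hXcv i) (hproj i _).1 (fun w hw => (hproj i _).2 w hw) (hyblk i)
        have hsq : ‖proj i (x k ω i - γ k • hk i) - y i‖ ^ 2 ≤ ‖(x k ω i - γ k • hk i) - y i‖ ^ 2 :=
          pow_le_pow_left₀ (norm_nonneg _) hproj_le 2
        have hexp : ‖(x k ω i - γ k • hk i) - y i‖ ^ 2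
            = ‖x k ω i - y i‖ ^ 2 - 2 * γ k * ⟪hk i, x k ω i - y i⟫ + γ k ^ 2 * ‖hk i‖ ^ 2 := by
          have e1 : (x k ω i - γ k • hk i) - y i = (x k ω i - y i) - γ k • hk i := by abel
          rw [e1, norm_sub_sq_real, real_inner_smul_right, norm_smul, Real.norm_eq_abs,
            mul_pow, sq_abs, real_inner_comm]
          ring
        rw [hrec']
        rw [hexp] at hsq
        exact hsq
      -- D difference
      have hDdiff : Df (k+1) - Df k
          = (pmin / p i) * (‖x (k+1) ω i - y i‖ ^ 2 - ‖x k ω i - y i‖ ^ 2) := by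
        simp only [hDf]
        rw [← Finset.sum_sub_distrib]
        rw [Finset.sum_eq_single i]
        · simp only [mul_sub]
        · intro j _ hj
          have hj' : j ≠ ι k ω := by rw [← hi]; exact hj
          have hxx : x (k+1) ω j = x k ω j := (hxrec k ω).2 j hj'
          simp only [hxx, sub_self]
        · simp
      have hwi0 : 0 ≤ pmin / p i := div_nonneg hpmin0.le (hp i).le
      have hDstep : Df (k+1) ≤ Df k
          - 2 * γ k * ((pmin / p i) * ⟪hk i, x k ω i - y i⟫)
          + γ k ^ 2 * ((pmin / p i) * ‖hk i‖ ^ 2) := by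
        have h1 : ‖x (k+1) ω i - y i‖ ^ 2 - ‖x k ω i - y i‖ ^ 2
            ≤ - (2 * γ k) * ⟪hk i, x k ω i - y i⟫ + γ k ^ 2 * ‖hk i‖ ^ 2 := by linarith [hblock]
        have h2 := mul_le_mul_of_nonneg_left h1 hwi0
        have h3 : Df (k+1) = Df k
            + (pmin / p i) * (‖x (k+1) ω i - y i‖ ^ 2 - ‖x k ω i - y i‖ ^ 2) := by
          linarith [hDdiff]
        rw [h3]
        nlinarith [h2]
      -- E step
      have hEstep : Ef (k+1) ≤ Ef k + 2 * γ k * ⟪vv, uu k - y⟫ + γ k ^ 2 * ‖vv‖ ^ 2 := by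
        have h1 : ∀ j, uu (k+1) j = proj j (uu k j + γ k • vv j) := by
          intro j
          rw [hu_succ k]
        have h2 : ∀ j : Fin d, ‖uu (k+1) j - y j‖ ^ 2 ≤ ‖(uu k + γ k • vv - y) j‖ ^ 2 := by
          intro j
          have hle : ‖proj j (uu k j + γ k • vv j) - y j‖ ≤ ‖(uu k j + γ k • vv j) - y j‖ :=
            nearest_dist_le (hXcv j) (hproj j _).1 (fun w hw => (hproj j _).2 w hw) (hyblk j)
          rw [h1 j]
          have : (uu k + γ k • vv - y) j = (uu k j + γ k • vv j) - y j := rfl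
          rw [this]
          exact pow_le_pow_left₀ (norm_nonneg _) hle 2
        have h3 : Ef (k+1) = ∑ j, ‖uu (k+1) j - y j‖ ^ 2 := by
          simp only [hEf]
          rw [PiLp.norm_sq_eq_of_L2]
          rfl
        have h4 : ∑ j, ‖(uu k + γ k • vv - y) j‖ ^ 2 = ‖uu k + γ k • vv - y‖ ^ 2 :=
          (PiLp.norm_sq_eq_of_L2 _ _).symm
        have h5 : ‖uu k + γ k • vv - y‖ ^ 2
            = Ef k + 2 * γ k * ⟪vv, uu k - y⟫ + γ k ^ 2 * ‖vv‖ ^ 2 := by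
          have e1 : uu k + γ k • vv - y = (uu k - y) + γ k • vv := by abel
          rw [e1, norm_add_sq_real, real_inner_smul_right, norm_smul, Real.norm_eq_abs,
            mul_pow, sq_abs, real_inner_comm, hEf]
          ring
        calc Ef (k+1) = ∑ j, ‖uu (k+1) j - y j‖ ^ 2 := h3
          _ ≤ ∑ j, ‖(uu k + γ k • vv - y) j‖ ^ 2 := Finset.sum_le_sum (fun j _ => h2 j)
          _ = Ef k + 2 * γ k * ⟪vv, uu k - y⟫ + γ k ^ 2 * ‖vv‖ ^ 2 := by rw [h4, h5]
      -- inner product decomposition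
      have hvdec : (pmin / p i) * ⟪hk i, x k ω i - y i⟫
          = pmin * ⟪hk, x k ω - y⟫ + ⟪vv, x k ω - y⟫ := by
        have e1 : ⟪vv, x k ω - y⟫ = (pmin / p i) * ⟪(piSingle i (hk i) : BlockSpace d n), x k ω - y⟫
            - pmin * ⟪hk, x k ω - y⟫ := by
          rw [hvv]
          unfold vVec
          rw [← hhk, inner_sub_left, real_inner_smul_left, real_inner_smul_left]
        rw [e1, inner_single_left_pi]
        have : (x k ω - y) i = x k ω i - y i := rfl
        rw [this]
        ring
      -- monotonicity and Cauchy-Schwarz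
      have hFy : pmin * ⟪F y, x k ω - y⟫ ≤ pmin * ⟪hk, x k ω - y⟫ + 2 * pmin * η k * Cf * M := by
        have h1 : ⟪F y, x k ω - y⟫ ≤ ⟪F (x k ω), x k ω - y⟫ := by
          have := hmono (x k ω) hzX y hyX
          rw [inner_sub_left] at this
          linarith
        have h2 : ⟪F (x k ω), x k ω - y⟫ = ⟪hk, x k ω - y⟫ - η k * ⟪g (x k ω), x k ω - y⟫ := by
          rw [hhk]
          unfold hVec
          rw [inner_add_left, real_inner_smul_left]
          ring
        have h3 : - ⟪g (x k ω), x k ω - y⟫ ≤ Cf * (2 * M) := by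
          have hcs : |⟪g (x k ω), x k ω - y⟫| ≤ ‖g (x k ω)‖ * ‖x k ω - y‖ := abs_real_inner_le_norm _ _
          have hb : ‖g (x k ω)‖ * ‖x k ω - y‖ ≤ Cf * (2 * M) := by
            apply mul_le_mul (hCf (x k ω) hzX) (hdist2M (x k ω) hzX y hyX) (norm_nonneg _) hCf0
          calc - ⟪g (x k ω), x k ω - y⟫ ≤ |⟪g (x k ω), x k ω - y⟫| := neg_le_abs _
            _ ≤ ‖g (x k ω)‖ * ‖x k ω - y‖ := hcs
            _ ≤ Cf * (2 * M) := hb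
        have h4 : ⟪F y, x k ω - y⟫ ≤ ⟪hk, x k ω - y⟫ + η k * (Cf * (2 * M)) := by
          have h5 : - (η k * ⟪g (x k ω), x k ω - y⟫) ≤ η k * (Cf * (2 * M)) := by
            rw [← mul_neg]
            exact mul_le_mul_of_nonneg_left h3 (hηpos k).le
          calc ⟪F y, x k ω - y⟫ ≤ ⟪F (x k ω), x k ω - y⟫ := h1
            _ = ⟪hk, x k ω - y⟫ - η k * ⟪g (x k ω), x k ω - y⟫ := h2
            _ ≤ ⟪hk, x k ω - y⟫ + η k * (Cf * (2 * M)) := by linarith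
        nlinarith [mul_le_mul_of_nonneg_left h4 hpmin0.le]
      -- combine
      have hcomb : 2 * γ k * (pmin * ⟪hk, x k ω - y⟫)
          ≤ ((Df k + Ef k) - (Df (k+1) + Ef (k+1)))
            + γ k ^ 2 * ((pmin / p i) * ‖hk i‖ ^ 2 + ‖vv‖ ^ 2)
            + 2 * γ k * ⟪vv, uu k - x k ω⟫ := by
        have e2 : ⟪vv, x k ω - y⟫ = ⟪vv, uu k - y⟫ - ⟪vv, uu k - x k ω⟫ := by
          rw [← inner_sub_right]
          congr 1
          abel
        have h6 : pmin * ⟪hk, x k ω - y⟫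
            = (pmin / p i) * ⟪hk i, x k ω i - y i⟫ - ⟪vv, uu k - y⟫ + ⟪vv, uu k - x k ω⟫ := by
          rw [hvdec, e2]; ring
        have hγ0 : 0 ≤ 2 * γ k := by linarith [hγpos k]
        calc 2 * γ k * (pmin * ⟪hk, x k ω - y⟫)
            = 2 * γ k * ((pmin / p i) * ⟪hk i, x k ω i - y i⟫)
              - 2 * γ k * ⟪vv, uu k - y⟫ + 2 * γ k * ⟪vv, uu k - x k ω⟫ := by rw [h6]; ring
          _ ≤ (Df k - Df (k+1) + γ k ^ 2 * ((pmin / p i) * ‖hk i‖ ^ 2))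
              + (Ef k - Ef (k+1) + γ k ^ 2 * ‖vv‖ ^ 2) + 2 * γ k * ⟪vv, uu k - x k ω⟫ := by
              have := hDstep
              have := hEstep
              linarith
          _ = ((Df k + Ef k) - (Df (k+1) + Ef (k+1)))
              + γ k ^ 2 * ((pmin / p i) * ‖hk i‖ ^ 2 + ‖vv‖ ^ 2)
              + 2 * γ k * ⟪vv, uu k - x k ω⟫ := by ring
      have hγ0 : 0 ≤ 2 * γ k := by linarith [hγpos k]
      have hFy2 := mul_le_mul_of_nonneg_left hFy hγ0
      calc 2 * γ k * (pmin * ⟪F y, x k ω - y⟫)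
          ≤ 2 * γ k * (pmin * ⟪hk, x k ω - y⟫ + 2 * pmin * η k * Cf * M) := hFy2
        _ = 2 * γ k * (pmin * ⟪hk, x k ω - y⟫) + 4 * γ k * pmin * η k * Cf * M := by ring
        _ ≤ ((Df k + Ef k) - (Df (k+1) + Ef (k+1)))
            + γ k ^ 2 * ((pmin / p i) * ‖hk i‖ ^ 2 + ‖vv‖ ^ 2)
            + 2 * γ k * ⟪vv, uu k - x k ω⟫
            + 4 * γ k * pmin * η k * Cf * M := by linarith [hcomb]
    -- scaled per-step inequality
    have hrp : ∀ k, γ k ^ (r - 1) * γ k = γ k ^ r := by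
      intro k
      have := Real.rpow_add_one (hγpos k).ne' (r - 1)
      rw [sub_add_cancel] at this
      rw [← this]
    have hrp2 : ∀ k, γ k ^ (r - 1) / 2 * γ k ^ 2 = γ k ^ r * γ k / 2 := by
      intro k
      rw [← hrp k]
      ring
    have hthetaeq : ∀ k, theta proj p pmin F g γ η x0 r k (fun j : Fin (k+1) => ι (j : ℕ) ω)
        = γ k ^ r * γ k / 2 * ((pmin / p (ι k ω)) * ‖hVec F g (η k) (x k ω) (ι k ω)‖ ^ 2
            + ‖vVec p pmin F g (η k) (ι k ω) (x k ω)‖ ^ 2)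
          + γ k ^ r * ⟪vVec p pmin F g (η k) (ι k ω) (x k ω), uu k - x k ω⟫ := by
      intro k
      have hcast : ((fun j : Fin (k+1) => ι (j : ℕ) ω) ∘ Fin.castSucc)
          = fun j : Fin k => ι (j : ℕ) ω := by
        funext j; simp [Fin.coe_castSucc]
      unfold theta
      rw [hcast]
      simp only [Fin.val_last]
      rw [← hx_eq k ω]
    have stepr : ∀ k, γ k ^ r * (pmin * ⟪F y, x k ω - y⟫)
        ≤ γ k ^ (r - 1) / 2 * ((Df k + Ef k) - (Df (k+1) + Ef (k+1)))
          + γ k ^ r * (2 * pmin * η k * Cf * M)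
          + theta proj p pmin F g γ η x0 r k (fun j : Fin (k+1) => ι (j : ℕ) ω) := by
      intro k
      have ha0 : 0 ≤ γ k ^ (r - 1) / 2 :=
        div_nonneg (Real.rpow_pos_of_pos (hγpos k) _).le (by norm_num)
      have h1 := mul_le_mul_of_nonneg_left (step k) ha0
      rw [hthetaeq k]
      have e1 : γ k ^ (r - 1) / 2 * (2 * γ k * (pmin * ⟪F y, x k ω - y⟫))
          = γ k ^ r * (pmin * ⟪F y, x k ω - y⟫) := by
        rw [← hrp k]; ring
      have e2 : γ k ^ (r - 1) / 2 * (γ k ^ 2 * ((pmin / p (ι k ω)) * ‖hVec F g (η k) (x k ω) (ι k ω)‖ ^ 2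
            + ‖vVec p pmin F g (η k) (ι k ω) (x k ω)‖ ^ 2))
          = γ k ^ r * γ k / 2 * ((pmin / p (ι k ω)) * ‖hVec F g (η k) (x k ω) (ι k ω)‖ ^ 2
            + ‖vVec p pmin F g (η k) (ι k ω) (x k ω)‖ ^ 2) := by
        rw [← hrp2 k]; ring
      have e3 : γ k ^ (r - 1) / 2 * (2 * γ k * ⟪vVec p pmin F g (η k) (ι k ω) (x k ω), uu k - x k ω⟫)
          = γ k ^ r * ⟪vVec p pmin F g (η k) (ι k ω) (x k ω), uu k - x k ω⟫ := by
        rw [← hrp k]; ring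
      have e4 : γ k ^ (r - 1) / 2 * (4 * γ k * pmin * η k * Cf * M)
          = γ k ^ r * (2 * pmin * η k * Cf * M) := by
        rw [← hrp k]; ring
      calc γ k ^ r * (pmin * ⟪F y, x k ω - y⟫)
          = γ k ^ (r - 1) / 2 * (2 * γ k * (pmin * ⟪F y, x k ω - y⟫)) := e1.symm
        _ ≤ γ k ^ (r - 1) / 2 * (((Df k + Ef k) - (Df (k+1) + Ef (k+1)))
            + γ k ^ 2 * ((pmin / p (ι k ω)) * ‖hVec F g (η k) (x k ω) (ι k ω)‖ ^ 2
                + ‖vVec p pmin F g (η k) (ι k ω) (x k ω)‖ ^ 2)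
            + 2 * γ k * ⟪vVec p pmin F g (η k) (ι k ω) (x k ω), uu k - x k ω⟫
            + 4 * γ k * pmin * η k * Cf * M) := h1
        _ = γ k ^ (r - 1) / 2 * ((Df k + Ef k) - (Df (k+1) + Ef (k+1)))
            + (γ k ^ r * γ k / 2 * ((pmin / p (ι k ω)) * ‖hVec F g (η k) (x k ω) (ι k ω)‖ ^ 2
                + ‖vVec p pmin F g (η k) (ι k ω) (x k ω)‖ ^ 2)
              + γ k ^ r * ⟪vVec p pmin F g (η k) (ι k ω) (x k ω), uu k - x k ω⟫)
            + γ k ^ r * (2 * pmin * η k * Cf * M) := by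
            rw [← e2, ← e3, ← e4]; ring
        _ = _ := by ring
    -- Abel summation bound
    have habel : ∑ k ∈ Finset.range (N+1), γ k ^ (r - 1) / 2 * ((Df k + Ef k) - (Df (k+1) + Ef (k+1)))
        ≤ 4 * M ^ 2 * γ N ^ (r - 1) := by
      have hmono' : ∀ k, γ k ^ (r - 1) / 2 ≤ γ (k+1) ^ (r - 1) / 2 := by
        intro k
        have h := Real.rpow_le_rpow_of_nonpos (hγpos (k+1)) (hγmono k)
          (by linarith : r - 1 ≤ 0)
        linarith
      have h := abel_sum_bound (fun k => γ k ^ (r - 1) / 2) (fun k => Df k + Ef k) (8 * M ^ 2)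
        hmono'
        (div_nonneg (Real.rpow_pos_of_pos (hγpos 0) _).le (by norm_num))
        (fun k => by show (0:ℝ) ≤ Df k + Ef k; have := hD0 k; have := hE0 k; linarith)
        (fun k => by show Df k + Ef k ≤ 8 * M ^ 2; have := hDle k; have := hEle k; linarith)
        N
      have haN : 0 ≤ γ N ^ (r - 1) / 2 :=
        div_nonneg (Real.rpow_pos_of_pos (hγpos N) _).le (by norm_num)
      have hbN : 0 ≤ Df (N+1) + Ef (N+1) := by have := hD0 (N+1); have := hE0 (N+1); linarith
      calc ∑ k ∈ Finset.range (N+1), γ k ^ (r - 1) / 2 * ((Df k + Ef k) - (Df (k+1) + Ef (k+1)))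
          ≤ γ N ^ (r - 1) / 2 * (8 * M ^ 2) - γ N ^ (r - 1) / 2 * (Df (N+1) + Ef (N+1)) := h
        _ ≤ γ N ^ (r - 1) / 2 * (8 * M ^ 2) := by nlinarith [mul_nonneg haN hbN]
        _ = 4 * M ^ 2 * γ N ^ (r - 1) := by ring
    -- sum the per-step inequalities
    have hsum : ∑ k ∈ Finset.range (N+1), γ k ^ r * (pmin * ⟪F y, x k ω - y⟫)
        ≤ 4 * M ^ 2 * γ N ^ (r - 1)
          + (∑ k ∈ Finset.range (N+1), γ k ^ r * (2 * pmin * η k * Cf * M))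
          + ∑ k ∈ Finset.range (N+1),
              theta proj p pmin F g γ η x0 r k (fun j : Fin (k+1) => ι (j : ℕ) ω) := by
      calc ∑ k ∈ Finset.range (N+1), γ k ^ r * (pmin * ⟪F y, x k ω - y⟫)
          ≤ ∑ k ∈ Finset.range (N+1), (γ k ^ (r - 1) / 2 * ((Df k + Ef k) - (Df (k+1) + Ef (k+1)))
            + γ k ^ r * (2 * pmin * η k * Cf * M)
            + theta proj p pmin F g γ η x0 r k (fun j : Fin (k+1) => ι (j : ℕ) ω)) :=
            Finset.sum_le_sum (fun k _ => stepr k)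
        _ = (∑ k ∈ Finset.range (N+1), γ k ^ (r - 1) / 2 * ((Df k + Ef k) - (Df (k+1) + Ef (k+1))))
            + (∑ k ∈ Finset.range (N+1), γ k ^ r * (2 * pmin * η k * Cf * M))
            + ∑ k ∈ Finset.range (N+1),
                theta proj p pmin F g γ η x0 r k (fun j : Fin (k+1) => ι (j : ℕ) ω) := by
            rw [Finset.sum_add_distrib, Finset.sum_add_distrib]
        _ ≤ _ := by
            have := habel
            linarith
    -- rewrite left-hand side
    have hlhs : pmin * S * ⟪F y, ((S⁻¹ • ∑ k ∈ Finset.range (N+1), γ k ^ r • x k ω) - y)⟫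
        = ∑ k ∈ Finset.range (N+1), γ k ^ r * (pmin * ⟪F y, x k ω - y⟫) := by
      have e1 : (S⁻¹ • ∑ k ∈ Finset.range (N+1), γ k ^ r • x k ω) - y
          = S⁻¹ • ((∑ k ∈ Finset.range (N+1), γ k ^ r • x k ω) - S • y) := by
        rw [smul_sub, smul_smul, inv_mul_cancel₀ hSpos.ne', one_smul]
      have e2 : (∑ k ∈ Finset.range (N+1), γ k ^ r • x k ω) - S • y
          = ∑ k ∈ Finset.range (N+1), γ k ^ r • (x k ω - y) := by
        rw [hSdef, Finset.sum_smul, ← Finset.sum_sub_distrib]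
        apply Finset.sum_congr rfl
        intro k _
        rw [smul_sub]
      have e3 : ⟪F y, ∑ k ∈ Finset.range (N+1), γ k ^ r • (x k ω - y)⟫
          = ∑ k ∈ Finset.range (N+1), γ k ^ r * ⟪F y, x k ω - y⟫ := by
        rw [inner_sum]
        exact Finset.sum_congr rfl (fun k _ => real_inner_smul_right _ _ _)
      rw [e1, e2, real_inner_smul_right, e3]
      have e4 : pmin * S * (S⁻¹ * (∑ k ∈ Finset.range (N+1), γ k ^ r * ⟪F y, x k ω - y⟫))
          = pmin * (∑ k ∈ Finset.range (N+1), γ k ^ r * ⟪F y, x k ω - y⟫) := by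
        rw [← mul_assoc, mul_assoc pmin S S⁻¹, mul_inv_cancel₀ hSpos.ne', mul_one]
      rw [e4, Finset.mul_sum]
      exact Finset.sum_congr rfl (fun k _ => by ring)
    rw [hlhs]
    exact hsum
  -- expectation of each theta term
  have htheta_int : ∀ k, (Integrable (fun ω =>
        theta proj p pmin F g γ η x0 r k (fun j : Fin (k+1) => ι j ω)) μ) := by
    intro k
    exact integrable_comp_finite μ
      (measurable_pi_lambda (fun ω (j : Fin (k+1)) => ι (j : ℕ) ω) (fun j => hιmeas j))
      (theta proj p pmin F g γ η x0 r k)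
  have hcyl : ∀ (m : ℕ) (c : Fin m → Fin d),
      μ ((fun ω (j : Fin m) => ι (j : ℕ) ω) ⁻¹' {c}) = ∏ j : Fin m, ENNReal.ofReal (p (c j)) := by
    intro m c
    set Af : ℕ → Set (Fin d) :=
      fun j => if h : j < m then ({c ⟨j, h⟩} : Set (Fin d)) else Set.univ with hAf
    have hpre : ((fun ω (j : Fin m) => ι (j : ℕ) ω) ⁻¹' {c})
        = ⋂ j ∈ Finset.range m, (ι j) ⁻¹' (Af j) := by
      ext ω
      constructor
      · intro hω
        have hω' : ∀ j : Fin m, ι (j : ℕ) ω = c j := by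
          intro j
          exact congrFun (Set.mem_singleton_iff.mp hω) j
        simp only [Set.mem_iInter, Finset.mem_range]
        intro j hj
        simp only [Set.mem_preimage, hAf, dif_pos hj, Set.mem_singleton_iff]
        exact hω' ⟨j, hj⟩
      · intro hω
        simp only [Set.mem_iInter, Finset.mem_range] at hω
        simp only [Set.mem_preimage, Set.mem_singleton_iff]
        funext j
        have := hω (j : ℕ) j.2
        simp only [Set.mem_preimage, hAf, dif_pos j.2, Set.mem_singleton_iff] at this
        simpa using this
    have hmeas : ∀ j ∈ Finset.range m, MeasurableSet (Af j) := by
      intro j hj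
      rw [hAf]
      simp only [dif_pos (Finset.mem_range.mp hj)]
      exact measurableSet_singleton _
    rw [hpre, hindep.measure_inter_preimage_eq_mul (Finset.range m) hmeas]
    have h1 : ∀ j : Fin m, μ ((ι (j : ℕ)) ⁻¹' (Af (j : ℕ))) = ENNReal.ofReal (p (c j)) := by
      intro j
      have hA : Af (j : ℕ) = {c j} := by
        simp only [hAf, dif_pos j.2, Fin.eta]
      rw [hA]
      have : (ι (j : ℕ)) ⁻¹' {c j} = {ω | ι (j : ℕ) ω = c j} := rfl
      rw [this, hdist]
    rw [← Fin.prod_univ_eq_prod_range (fun j => μ ((ι j) ⁻¹' (Af j))) m]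
    exact Finset.prod_congr rfl (fun j _ => h1 j)
  have hkey : ∀ (k : ℕ) (z uu : BlockSpace d n), z ∈ X → uu ∈ X →
      ∑ i, p i * (γ k ^ r * γ k / 2 * ((pmin / p i) * ‖hVec F g (η k) z i‖ ^ 2
          + ‖vVec p pmin F g (η k) i z‖ ^ 2)
        + γ k ^ r * ⟪vVec p pmin F g (η k) i z, uu - z⟫)
      ≤ γ k ^ r * (γ k * CF ^ 2 + γ k * η k ^ 2 * Cf ^ 2) := by
    intro k z uu hzX huuX
    set h := hVec F g (η k) z with hh
    have hnormsum : ∑ i, ‖h i‖ ^ 2 = ‖h‖ ^ 2 := (PiLp.norm_sq_eq_of_L2 _ h).symm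
    have hsum0 : ∑ i, p i • vVec p pmin F g (η k) i z = 0 := by
      unfold vVec
      rw [← hh]
      simp only [smul_sub]
      rw [Finset.sum_sub_distrib]
      have h1 : ∀ i : Fin d, p i • ((pmin / p i) • (piSingle i (h i) : BlockSpace d n))
          = pmin • (piSingle i (h i) : BlockSpace d n) := by
        intro i
        rw [smul_smul]
        congr 1
        rw [mul_comm (p i) (pmin / p i), div_mul_cancel₀ _ (hp i).ne']
      have h2 : (∑ i, p i • ((pmin / p i) • (piSingle i (h i) : BlockSpace d n)))
          = pmin • h := by
        rw [Finset.sum_congr rfl (fun i _ => h1 i), ← Finset.smul_sum, sum_piSingle]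
      have h3 : (∑ i : Fin d, p i • (pmin • h)) = pmin • h := by
        rw [← Finset.sum_smul, hpsum, one_smul]
      rw [h2, h3, sub_self]
    have hinner0 : ∑ i, p i * ⟪vVec p pmin F g (η k) i z, uu - z⟫ = 0 := by
      have : ∀ i : Fin d, p i * ⟪vVec p pmin F g (η k) i z, uu - z⟫
          = ⟪p i • vVec p pmin F g (η k) i z, uu - z⟫ := by
        intro i; rw [real_inner_smul_left]
      rw [Finset.sum_congr rfl (fun i _ => this i), ← sum_inner, hsum0, inner_zero_left]
    have hv2 : ∀ i, ‖vVec p pmin F g (η k) i z‖ ^ 2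
        = (pmin / p i) ^ 2 * ‖h i‖ ^ 2 - 2 * (pmin / p i) * pmin * ‖h i‖ ^ 2
          + pmin ^ 2 * ‖h‖ ^ 2 := by
      intro i
      unfold vVec
      rw [← hh, norm_sub_sq_real, norm_smul, norm_smul, real_inner_smul_left,
        real_inner_smul_right, inner_single_left_pi]
      rw [mul_pow, mul_pow, norm_single_pi]
      rw [real_inner_self_eq_norm_sq]
      rw [Real.norm_eq_abs, Real.norm_eq_abs, sq_abs, sq_abs]
      ring
    have hQ : ∑ i, p i * ((pmin / p i) * ‖h i‖ ^ 2 + ‖vVec p pmin F g (η k) i z‖ ^ 2)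
        ≤ ‖h‖ ^ 2 := by
      have hterm : ∀ i : Fin d, p i * ((pmin / p i) * ‖h i‖ ^ 2
            + ‖vVec p pmin F g (η k) i z‖ ^ 2)
          = pmin * ‖h i‖ ^ 2 + (pmin ^ 2 / p i) * ‖h i‖ ^ 2
            - 2 * pmin ^ 2 * ‖h i‖ ^ 2 + p i * pmin ^ 2 * ‖h‖ ^ 2 := by
        intro i
        rw [hv2 i]
        field_simp [(hp i).ne']
        ring
      rw [Finset.sum_congr rfl (fun i _ => hterm i)]
      have hsplit : ∑ i, (pmin * ‖h i‖ ^ 2 + (pmin ^ 2 / p i) * ‖h i‖ ^ 2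
            - 2 * pmin ^ 2 * ‖h i‖ ^ 2 + p i * pmin ^ 2 * ‖h‖ ^ 2)
          = pmin * ‖h‖ ^ 2 + (∑ i, (pmin ^ 2 / p i) * ‖h i‖ ^ 2)
            - 2 * pmin ^ 2 * ‖h‖ ^ 2 + pmin ^ 2 * ‖h‖ ^ 2 := by
        have e1 : ∀ i : Fin d, (pmin * ‖h i‖ ^ 2 + (pmin ^ 2 / p i) * ‖h i‖ ^ 2
              - 2 * pmin ^ 2 * ‖h i‖ ^ 2 + p i * pmin ^ 2 * ‖h‖ ^ 2)
            = (pmin - 2 * pmin ^ 2) * ‖h i‖ ^ 2 + (pmin ^ 2 / p i) * ‖h i‖ ^ 2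
              + (pmin ^ 2 * ‖h‖ ^ 2) * p i := by
          intro i; ring
        rw [Finset.sum_congr rfl (fun i _ => e1 i), Finset.sum_add_distrib,
          Finset.sum_add_distrib, ← Finset.mul_sum, ← Finset.mul_sum, hnormsum, hpsum]
        ring
      rw [hsplit]
      have hmid : (∑ i, (pmin ^ 2 / p i) * ‖h i‖ ^ 2) ≤ pmin * ‖h‖ ^ 2 := by
        calc (∑ i, (pmin ^ 2 / p i) * ‖h i‖ ^ 2) ≤ ∑ i, pmin * ‖h i‖ ^ 2 := by
              apply Finset.sum_le_sum
              intro i _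
              apply mul_le_mul_of_nonneg_right _ (sq_nonneg _)
              rw [div_le_iff₀ (hp i)]
              nlinarith [hpminle i, hpmin0]
          _ = pmin * ‖h‖ ^ 2 := by rw [← Finset.mul_sum, hnormsum]
      nlinarith [sq_nonneg ‖h‖, hpmin0, hpmin1, sq_nonneg (1 - pmin)]
    have hhb : ‖h‖ ^ 2 ≤ 2 * (CF ^ 2 + η k ^ 2 * Cf ^ 2) := by
      have h1 : ‖h‖ ≤ CF + η k * Cf := hhz k z hzX
      have h2 : ‖h‖ ^ 2 ≤ (CF + η k * Cf) ^ 2 := by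
        apply pow_le_pow_left₀ (norm_nonneg _) h1
      nlinarith [sq_nonneg (CF - η k * Cf), (hηpos k).le, hCF0, hCf0]
    have hsplit2 : ∑ i, p i * (γ k ^ r * γ k / 2 * ((pmin / p i) * ‖h i‖ ^ 2
          + ‖vVec p pmin F g (η k) i z‖ ^ 2)
        + γ k ^ r * ⟪vVec p pmin F g (η k) i z, uu - z⟫)
        = γ k ^ r * γ k / 2 * (∑ i, p i * ((pmin / p i) * ‖h i‖ ^ 2
            + ‖vVec p pmin F g (η k) i z‖ ^ 2))
          + γ k ^ r * (∑ i, p i * ⟪vVec p pmin F g (η k) i z, uu - z⟫) := by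
      rw [Finset.mul_sum, Finset.mul_sum, ← Finset.sum_add_distrib]
      apply Finset.sum_congr rfl
      intro i _
      ring
    rw [hsplit2, hinner0, mul_zero, add_zero]
    have hA : 0 ≤ γ k ^ r * γ k / 2 :=
      div_nonneg (mul_nonneg (hγr k).le (hγpos k).le) (by norm_num)
    calc γ k ^ r * γ k / 2 * (∑ i, p i * ((pmin / p i) * ‖h i‖ ^ 2
          + ‖vVec p pmin F g (η k) i z‖ ^ 2))
        ≤ γ k ^ r * γ k / 2 * (2 * (CF ^ 2 + η k ^ 2 * Cf ^ 2)) := by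
          apply mul_le_mul_of_nonneg_left (hQ.trans hhb) hA
      _ = γ k ^ r * (γ k * CF ^ 2 + γ k * η k ^ 2 * Cf ^ 2) := by ring
  have htheta : ∀ k, (∫ ω, theta proj p pmin F g γ η x0 r k (fun j : Fin (k+1) => ι j ω) ∂μ)
      ≤ γ k ^ r * (γ k * CF ^ 2 + γ k * η k ^ 2 * Cf ^ 2) := by
    intro k
    have hTmeas : Measurable (fun ω (j : Fin (k+1)) => ι (j : ℕ) ω) :=
      measurable_pi_lambda _ (fun j => hιmeas j)
    rw [integral_comp_finite μ hTmeas (theta proj p pmin F g γ η x0 r k)]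
    have hμc : ∀ c : Fin (k+1) → Fin d,
        (μ ((fun ω (j : Fin (k+1)) => ι (j : ℕ) ω) ⁻¹' {c})).toReal = ∏ j, p (c j) := by
      intro c
      rw [hcyl (k+1) c, ENNReal.toReal_prod]
      exact Finset.prod_congr rfl (fun j _ => ENNReal.toReal_ofReal (hp (c j)).le)
    rw [Finset.sum_congr rfl (fun c _ => by rw [hμc c])]
    rw [← Equiv.sum_comp (snocEquiv d k)
      (fun c => (∏ j, p (c j)) * theta proj p pmin F g γ η x0 r k c), Fintype.sum_prod_type]
    have hterm : ∀ (c' : Fin k → Fin d) (i : Fin d),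
        (∏ j, p (((snocEquiv d k) (c', i)) j)) * theta proj p pmin F g γ η x0 r k
            ((snocEquiv d k) (c', i))
        = (∏ j, p (c' j)) * (p i *
            (γ k ^ r * γ k / 2 * ((pmin / p i) * ‖hVec F g (η k) (pathX proj F g γ η x0 k c') i‖ ^ 2
              + ‖vVec p pmin F g (η k) i (pathX proj F g γ η x0 k c')‖ ^ 2)
            + γ k ^ r * ⟪vVec p pmin F g (η k) i (pathX proj F g γ η x0 k c'),
                pathU proj p pmin F g γ η x0 k c' - pathX proj F g γ η x0 k c'⟫)) := by
      intro c' i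
      have hcomp : (((snocEquiv d k) (c', i) : Fin (k+1) → Fin d) ∘ Fin.castSucc) = c' := by
        funext j
        simp [snocEquiv]
      have hlast : ((snocEquiv d k) (c', i) : Fin (k+1) → Fin d) (Fin.last k) = i := by
        simp [snocEquiv]
      have hprod : (∏ j, p (((snocEquiv d k) (c', i)) j)) = (∏ j, p (c' j)) * p i := by
        rw [Fin.prod_univ_castSucc]
        simp only [hlast]
        congr 1
        apply Finset.prod_congr rfl
        intro j _
        congr 1
        simp [snocEquiv]
      rw [hprod]
      unfold theta
      rw [hcomp, hlast]
      ring
    rw [Finset.sum_congr rfl (fun c' _ => Finset.sum_congr rfl (fun i _ => hterm c' i))]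
    have hle1 : ∀ c' : Fin k → Fin d,
        ∑ i, (∏ j, p (c' j)) * (p i *
            (γ k ^ r * γ k / 2 * ((pmin / p i) * ‖hVec F g (η k) (pathX proj F g γ η x0 k c') i‖ ^ 2
              + ‖vVec p pmin F g (η k) i (pathX proj F g γ η x0 k c')‖ ^ 2)
            + γ k ^ r * ⟪vVec p pmin F g (η k) i (pathX proj F g γ η x0 k c'),
                pathU proj p pmin F g γ η x0 k c' - pathX proj F g γ η x0 k c'⟫))
        ≤ (∏ j, p (c' j)) * (γ k ^ r * (γ k * CF ^ 2 + γ k * η k ^ 2 * Cf ^ 2)) := by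
      intro c'
      rw [← Finset.mul_sum]
      apply mul_le_mul_of_nonneg_left _ (Finset.prod_nonneg (fun j _ => (hp _).le))
      exact hkey k _ _ (hPXmem k c') (hPUmem k c')
    calc ∑ c' : Fin k → Fin d, ∑ i, (∏ j, p (c' j)) * (p i *
            (γ k ^ r * γ k / 2 * ((pmin / p i) * ‖hVec F g (η k) (pathX proj F g γ η x0 k c') i‖ ^ 2
              + ‖vVec p pmin F g (η k) i (pathX proj F g γ η x0 k c')‖ ^ 2)
            + γ k ^ r * ⟪vVec p pmin F g (η k) i (pathX proj F g γ η x0 k c'),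
                pathU proj p pmin F g γ η x0 k c' - pathX proj F g γ η x0 k c'⟫))
        ≤ ∑ c' : Fin k → Fin d, (∏ j, p (c' j)) * (γ k ^ r * (γ k * CF ^ 2 + γ k * η k ^ 2 * Cf ^ 2)) :=
          Finset.sum_le_sum (fun c' _ => hle1 c')
      _ = γ k ^ r * (γ k * CF ^ 2 + γ k * η k ^ 2 * Cf ^ 2) := by
          rw [← Finset.sum_mul, sum_prod_paths p hpsum k, one_mul]
  -- assembling
  have hpS : 0 < pmin * S := mul_pos hpmin0 hSpos
  have hgap : ∀ ω, dualGap X F (S⁻¹ • ∑ k ∈ Finset.range (N + 1), γ k ^ r • x k ω)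
      ≤ (4 * M ^ 2 * γ N ^ (r - 1)
          + (∑ k ∈ Finset.range (N+1), γ k ^ r * (2 * pmin * η k * Cf * M))
          + ∑ k ∈ Finset.range (N+1),
              theta proj p pmin F g γ η x0 r k (fun j : Fin (k+1) => ι (j : ℕ) ω))
        / (pmin * S) := by
    intro ω
    apply csSup_le
    · exact ⟨_, ⟨x0, hx0X, rfl⟩⟩
    · rintro b ⟨y, hyX, rfl⟩
      rw [le_div_iff₀ hpS]
      calc ⟪F y, (S⁻¹ • ∑ k ∈ Finset.range (N + 1), γ k ^ r • x k ω) - y⟫ * (pmin * S)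
          = pmin * S * ⟪F y, (S⁻¹ • ∑ k ∈ Finset.range (N + 1), γ k ^ r • x k ω) - y⟫ := by
            ring
        _ ≤ _ := master ω y hyX
  have hTmeasN : Measurable (fun ω (j : Fin (N+1)) => ι (j : ℕ) ω) :=
    measurable_pi_lambda _ (fun j => hιmeas j)
  have hGeq : (fun ω => dualGap X F (S⁻¹ • ∑ k ∈ Finset.range (N + 1), γ k ^ r • x k ω))
      = fun ω => (fun c : Fin (N+1) → Fin d =>
          dualGap X F (S⁻¹ • ∑ k ∈ Finset.range (N + 1), γ k ^ r •
            pathX proj F g γ η x0 k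
              (fun j : Fin k => if h : (j : ℕ) < N + 1 then c ⟨(j : ℕ), h⟩ else i0)))
        ((fun ω (j : Fin (N+1)) => ι (j : ℕ) ω) ω) := by
    funext ω
    show dualGap X F _ = dualGap X F _
    have hAB : (∑ k ∈ Finset.range (N + 1), γ k ^ r • x k ω)
        = ∑ k ∈ Finset.range (N + 1), γ k ^ r •
            pathX proj F g γ η x0 k
              (fun j : Fin k => if h : (j : ℕ) < N + 1
                then (fun j' : Fin (N+1) => ι (j' : ℕ) ω) ⟨(j : ℕ), h⟩ else i0) := by
      apply Finset.sum_congr rfl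
      intro k hk
      rw [hx_eq k ω]
      have hfn : (fun j : Fin k => if h : (j : ℕ) < N + 1
            then (fun j' : Fin (N+1) => ι (j' : ℕ) ω) ⟨(j : ℕ), h⟩ else i0)
          = fun j : Fin k => ι (j : ℕ) ω := by
        funext j
        rw [dif_pos (lt_trans j.2 (Finset.mem_range.mp hk))]
      rw [hfn]
    rw [hAB]
  have hGint : Integrable
      (fun ω => dualGap X F (S⁻¹ • ∑ k ∈ Finset.range (N + 1), γ k ^ r • x k ω)) μ := by
    rw [hGeq]
    exact integrable_comp_finite μ hTmeasN (fun c : Fin (N+1) → Fin d =>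
      dualGap X F (S⁻¹ • ∑ k ∈ Finset.range (N + 1), γ k ^ r •
        pathX proj F g γ η x0 k
          (fun j : Fin k => if h : (j : ℕ) < N + 1 then c ⟨(j : ℕ), h⟩ else i0)))
  have hsumint : Integrable (fun ω => ∑ k ∈ Finset.range (N+1),
      theta proj p pmin F g γ η x0 r k (fun j : Fin (k+1) => ι (j : ℕ) ω)) μ :=
    integrable_finset_sum _ (fun k _ => htheta_int k)
  have hRint : Integrable (fun ω => (4 * M ^ 2 * γ N ^ (r - 1)
      + (∑ k ∈ Finset.range (N+1), γ k ^ r * (2 * pmin * η k * Cf * M))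
      + ∑ k ∈ Finset.range (N+1),
          theta proj p pmin F g γ η x0 r k (fun j : Fin (k+1) => ι (j : ℕ) ω))
      / (pmin * S)) μ :=
    (((integrable_const _).add hsumint)).div_const _
  calc (∫ ω, dualGap X F (S⁻¹ • ∑ k ∈ Finset.range (N + 1), γ k ^ r • x k ω) ∂μ)
      ≤ ∫ ω, (4 * M ^ 2 * γ N ^ (r - 1)
          + (∑ k ∈ Finset.range (N+1), γ k ^ r * (2 * pmin * η k * Cf * M))
          + ∑ k ∈ Finset.range (N+1),
              theta proj p pmin F g γ η x0 r k (fun j : Fin (k+1) => ι (j : ℕ) ω))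
          / (pmin * S) ∂μ := integral_mono hGint hRint hgap
    _ = (4 * M ^ 2 * γ N ^ (r - 1)
          + (∑ k ∈ Finset.range (N+1), γ k ^ r * (2 * pmin * η k * Cf * M))
          + ∑ k ∈ Finset.range (N+1), ∫ ω,
              theta proj p pmin F g γ η x0 r k (fun j : Fin (k+1) => ι (j : ℕ) ω) ∂μ)
          / (pmin * S) := by
        rw [integral_div]
        congr 1
        rw [integral_add (integrable_const _) hsumint]
        rw [integral_const]
        simp only [probReal_univ, measure_univ, ENNReal.toReal_one, smul_eq_mul, one_mul]
        congr 1
        rw [integral_finset_sum _ (fun k _ => htheta_int k)]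
    _ ≤ (4 * M ^ 2 * γ N ^ (r - 1)
          + ∑ k ∈ Finset.range (N + 1),
              γ k ^ r * (2 * pmin * η k * Cf * M + γ k * CF ^ 2 + γ k * η k ^ 2 * Cf ^ 2))
          / (pmin * S) := by
        rw [div_le_div_iff_of_pos_right hpS]
        have h1 : ∑ k ∈ Finset.range (N+1), ∫ ω,
              theta proj p pmin F g γ η x0 r k (fun j : Fin (k+1) => ι (j : ℕ) ω) ∂μ
            ≤ ∑ k ∈ Finset.range (N+1), γ k ^ r * (γ k * CF ^ 2 + γ k * η k ^ 2 * Cf ^ 2) :=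
          Finset.sum_le_sum (fun k _ => htheta k)
        have h2 : (∑ k ∈ Finset.range (N+1), γ k ^ r * (2 * pmin * η k * Cf * M))
              + ∑ k ∈ Finset.range (N+1), γ k ^ r * (γ k * CF ^ 2 + γ k * η k ^ 2 * Cf ^ 2)
            = ∑ k ∈ Finset.range (N + 1),
              γ k ^ r * (2 * pmin * η k * Cf * M + γ k * CF ^ 2 + γ k * η k ^ 2 * Cf ^ 2) := by
          rw [← Finset.sum_add_distrib]
          exact Finset.sum_congr rfl (fun k _ => by ring)
        linarith
    _ = _ := rfl

/-- Infeasibility bound for the aRB-IRG algorithm (Proposition 3.2(b)):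
for nonincreasing positive stepsizes `γ` and regularization parameters `η`, bounded `X`,
bounded subgradients and mapping, and `SOL(X,F) ≠ ∅`, one has for every `N ≥ 1`
`E[GAP(x̄_N)] ≤ (4M²γ_N^{r−1} + Σ_{k=0}^N γ_k^r(2p_min η_k C_f M + γ_k C_F² + γ_k η_k² C_f²))
  / (p_min Σ_{k=0}^N γ_k^r)`. -/
theorem aRBIRG_infeasibility_bound {d : ℕ} {n : Fin d → ℕ}
    {Ω : Type*} [MeasurableSpace Ω] (μ : Measure Ω) [IsProbabilityMeasure μ]
    [MeasurableSpace (BlockSpace d n)] [BorelSpace (BlockSpace d n)]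
    (Xs : ∀ i, Set (EuclideanSpace ℝ (Fin (n i))))
    (hXne : ∀ i, (Xs i).Nonempty) (hXcl : ∀ i, IsClosed (Xs i)) (hXcv : ∀ i, Convex ℝ (Xs i))
    (X : Set (BlockSpace d n)) (hX : X = {x | ∀ i, x i ∈ Xs i})
    (M : ℝ) (hM : ∀ x ∈ X, ‖x‖ ≤ M)
    (f : BlockSpace d n → ℝ) (hf : ConvexOn ℝ Set.univ f)
    (g : BlockSpace d n → BlockSpace d n)
    (hsubgrad : ∀ x ∈ X, ∀ y : BlockSpace d n, f x + ⟪g x, y - x⟫ ≤ f y)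
    (Cf : ℝ) (hCf : ∀ x ∈ X, ‖g x‖ ≤ Cf)
    (F : BlockSpace d n → BlockSpace d n) (hFcont : Continuous F)
    (hmono : ∀ x ∈ X, ∀ y ∈ X, 0 ≤ ⟪F x - F y, x - y⟫)
    (CF : ℝ) (hCF : ∀ x ∈ X, ‖F x‖ ≤ CF)
    (p : Fin d → ℝ) (hp : ∀ i, 0 < p i) (hpsum : ∑ i, p i = 1)
    (pmin : ℝ) (hpmin : IsLeast (Set.range p) pmin)
    (ι : ℕ → Ω → Fin d) (hιmeas : ∀ k, Measurable (ι k))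
    (hindep : iIndepFun ι μ)
    (hdist : ∀ k i, μ {ω | ι k ω = i} = ENNReal.ofReal (p i))
    (γ η : ℕ → ℝ) (hγpos : ∀ k, 0 < γ k) (hηpos : ∀ k, 0 < η k)
    (hγmono : ∀ k, γ (k + 1) ≤ γ k) (hηmono : ∀ k, η (k + 1) ≤ η k)
    (r : ℝ) (hr0 : 0 ≤ r) (hr1 : r < 1)
    (proj : ∀ i, EuclideanSpace ℝ (Fin (n i)) → EuclideanSpace ℝ (Fin (n i)))
    (hproj : ∀ i z, proj i z ∈ Xs i ∧ ∀ w ∈ Xs i, ‖z - proj i z‖ ≤ ‖z - w‖)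
    (x0 : BlockSpace d n) (hx0X : x0 ∈ X)
    (x : ℕ → Ω → BlockSpace d n) (hxmeas : ∀ k, Measurable (x k))
    (hx0 : ∀ ω, x 0 ω = x0)
    (hxrec : ∀ k ω,
      (x (k + 1) ω) (ι k ω) = proj (ι k ω) ((x k ω) (ι k ω)
        - γ k • (F (x k ω) (ι k ω) + η k • g (x k ω) (ι k ω)))
      ∧ ∀ j, j ≠ ι k ω → x (k + 1) ω j = x k ω j)
    (hSOL : (VISol X F).Nonempty)
    (N : ℕ) (hN : 1 ≤ N) :
    (∫ ω, dualGap X F ((∑ k ∈ Finset.range (N + 1), γ k ^ r)⁻¹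
        • ∑ k ∈ Finset.range (N + 1), γ k ^ r • x k ω) ∂μ)
      ≤ (4 * M ^ 2 * γ N ^ (r - 1)
          + ∑ k ∈ Finset.range (N + 1),
              γ k ^ r * (2 * pmin * η k * Cf * M + γ k * CF ^ 2 + γ k * η k ^ 2 * Cf ^ 2))
        / (pmin * ∑ k ∈ Finset.range (N + 1), γ k ^ r) :=
  aRBIRG_aux μ Xs hXne hXcl hXcv X hX M hM g Cf hCf F hmono CF hCF p hp hpsum pmin hpmin
    ι hιmeas hindep hdist γ η hγpos hηpos hγmono r hr1 proj hproj x0 hx0X x hx0 hxrec N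
end
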